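/- arXiv:2305.11485 — 3 statements merged into one kernel-verified Lean document; each statement's English description precedes it below -/
import Mathlib

section
/- For any integers k ≥ 1 and l ≥ 1, the triangle T_{k,l} with vertices (0,0), (1+1/l, 0), and (0, (l+1)(k+1)) contains exactly k interior integral points and has area (l+1)²(k+1)/(2l). -/
open MeasureTheory Set

noncomputable section

/-- The set of integral lattice points of `ℝ × ℝ`. -/
def latticePts : Set (ℝ × ℝ) := {p | ∃ m n : ℤ, p = ((m : ℝ), (n : ℝ))}

/-- A planar convex body: compact, convex, with nonempty interior. -/
def IsConvexBody (K : Set (ℝ × ℝ)) : Prop :=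
  IsCompact K ∧ Convex ℝ K ∧ (interior K).Nonempty

/-- The width of `K` in direction `v` (as a linear functional via the dot product). -/
def width (K : Set (ℝ × ℝ)) (v : ℝ × ℝ) : ℝ :=
  sSup ((fun p => v.1 * p.1 + v.2 * p.2) '' K) - sInf ((fun p => v.1 * p.1 + v.2 * p.2) '' K)

/-- The lattice width of `K`: minimal width over nonzero integral dual vectors. -/
def latticeWidth (K : Set (ℝ × ℝ)) : ℝ :=
  sInf {w | ∃ v : ℤ × ℤ, v ≠ 0 ∧ w = width K ((v.1 : ℝ), (v.2 : ℝ))}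

/-- The length (1-dimensional Lebesgue measure) of the vertical slice of `K` at `x₁ = t`. -/
def sliceLen (K : Set (ℝ × ℝ)) (t : ℝ) : ℝ :=
  (volume {y : ℝ | (t, y) ∈ K}).toReal

/-- The set of positions of maximal vertical slicing length. -/
def maxSlicePos (K : Set (ℝ × ℝ)) : Set ℝ :=
  {t ∈ Prod.fst '' K | ∀ s ∈ Prod.fst '' K, sliceLen K s ≤ sliceLen K t}

/-- The position of the longest vertical slicing length: midpoint of the interval of maximizers. -/
def plvsl (K : Set (ℝ × ℝ)) : ℝ :=
  (sInf (maxSlicePos K) + sSup (maxSlicePos K)) / 2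

/-- The area of a planar set. -/
def area (K : Set (ℝ × ℝ)) : ℝ := (volume K).toReal

/-- The number of interior integral points of `K`. -/
def intPts (K : Set (ℝ × ℝ)) : ℕ := (interior K ∩ latticePts).ncard

/-- The triangle `T_{k,l}` with vertices `(0,0)`, `(1+1/l,0)` and `(0,(l+1)(k+1))`. -/
def Tkl (k l : ℤ) : Set (ℝ × ℝ) :=
  convexHull ℝ {((0 : ℝ), (0 : ℝ)), (1 + 1 / (l : ℝ), 0), (0, ((l : ℝ) + 1) * ((k : ℝ) + 1))}

/-- A lattice polygon: convex hull of a nonempty finite set of lattice points,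
two-dimensional (nonempty interior). -/
def IsLatticePolygon (P : Set (ℝ × ℝ)) : Prop :=
  (∃ S : Finset (ℤ × ℤ), S.Nonempty ∧
      P = convexHull ℝ ((fun q : ℤ × ℤ => ((q.1 : ℝ), (q.2 : ℝ))) '' ↑S)) ∧
    (interior P).Nonempty

/-- The affine map given by an integral matrix and integral translation vector. -/
def UnimodMap (a b c d e f : ℤ) : (ℝ × ℝ) → (ℝ × ℝ) := fun p =>
  ((a : ℝ) * p.1 + (b : ℝ) * p.2 + (e : ℝ), (c : ℝ) * p.1 + (d : ℝ) * p.2 + (f : ℝ))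

/-- Affine unimodular equivalence of subsets of the plane. -/
def UnimodEquiv (P Q : Set (ℝ × ℝ)) : Prop :=
  ∃ a b c d e f : ℤ, (a * d - b * c = 1 ∨ a * d - b * c = -1) ∧
    Q = UnimodMap a b c d e f '' P

/-- The `m`-th multiple of the standard lattice triangle `Δ₂`. -/
def stdTriangle (m : ℤ) : Set (ℝ × ℝ) :=
  convexHull ℝ {((0 : ℝ), (0 : ℝ)), ((m : ℝ), 0), (0, (m : ℝ))}

/-- The (outer) normal cone of `P` at a point `x`. -/
def normalCone (P : Set (ℝ × ℝ)) (x : ℝ × ℝ) : Set (ℝ × ℝ) :=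
  {v | ∀ y ∈ P, v.1 * y.1 + v.2 * y.2 ≤ v.1 * x.1 + v.2 * x.2}

/-- The rays of the smooth refinement of the normal fan of `P`: for each full-dimensional
normal cone `σ` (i.e. the normal cone of a vertex of `P`), the rays through the lattice points
on the bounded edges of `conv (σ ∩ (ℤ² \ {0}))`, which for a two-dimensional cone are exactly
the irreducible lattice points (Hilbert basis elements) of `σ`. -/
def smoothFanRays (P : Set (ℝ × ℝ)) : Set (ℤ × ℤ) :=
  {u | u ≠ 0 ∧ ∃ x ∈ P, (interior (normalCone P x)).Nonempty ∧
    ((u.1 : ℝ), (u.2 : ℝ)) ∈ normalCone P x ∧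
    ¬ ∃ v w : ℤ × ℤ, v ≠ 0 ∧ w ≠ 0 ∧ ((v.1 : ℝ), (v.2 : ℝ)) ∈ normalCone P x ∧
      ((w.1 : ℝ), (w.2 : ℝ)) ∈ normalCone P x ∧ u = v + w}

/-- `P` has denominator dividing `l`: it is the convex hull of finitely many points of
`(1/l)·ℤ²`. -/
def HasDenom (P : Set (ℝ × ℝ)) (l : ℤ) : Prop :=
  ∃ S : Finset (ℤ × ℤ), S.Nonempty ∧
    P = convexHull ℝ ((fun q : ℤ × ℤ => ((q.1 : ℝ) / (l : ℝ), (q.2 : ℝ) / (l : ℝ))) '' ↑S)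

def triS (a b : ℝ) : Set (ℝ × ℝ) := {p | 0 ≤ p.1 ∧ 0 ≤ p.2 ∧ b * p.1 + a * p.2 ≤ a * b}

def triO (a b : ℝ) : Set (ℝ × ℝ) := {p | 0 < p.1 ∧ 0 < p.2 ∧ b * p.1 + a * p.2 < a * b}

lemma interior_triS (a b : ℝ) (ha : 0 < a) (hb : 0 < b) :
    interior (triS a b) = triO a b := by
  apply subset_antisymm
  · intro p hp
    rw [mem_interior_iff_mem_nhds, Metric.mem_nhds_iff] at hp
    obtain ⟨ε, hε, hball⟩ := hp
    have key : ∀ u v : ℝ, |u| < ε → |v| < ε → ((p.1 + u, p.2 + v) : ℝ × ℝ) ∈ triS a b := by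
      intro u v hu hv
      apply hball
      rw [Metric.mem_ball, Prod.dist_eq, max_lt_iff]
      constructor
      · simpa [Real.dist_eq] using hu
      · simpa [Real.dist_eq] using hv
    have habs : |(-(ε/2) : ℝ)| < ε := by rw [abs_neg, abs_of_pos (by linarith)]; linarith
    have habs' : |((ε/2) : ℝ)| < ε := by rw [abs_of_pos (by linarith)]; linarith
    have h0 : |(0:ℝ)| < ε := by simpa using hε
    obtain ⟨k1, -, -⟩ := key (-(ε/2)) 0 habs h0
    obtain ⟨-, k2, -⟩ := key 0 (-(ε/2)) h0 habs
    obtain ⟨-, -, k3⟩ := key (ε/2) 0 habs' h0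
    refine ⟨by simp at k1; linarith, by simp at k2; linarith, by simp at k3; nlinarith⟩
  · apply interior_maximal
    · rintro p ⟨h1, h2, h3⟩; exact ⟨h1.le, h2.le, h3.le⟩
    · have : triO a b = (Prod.fst ⁻¹' Ioi 0) ∩ (Prod.snd ⁻¹' Ioi 0) ∩
          {p : ℝ × ℝ | b * p.1 + a * p.2 < a * b} := by
        ext p; simp [triO, and_assoc]
      rw [this]
      apply IsOpen.inter (IsOpen.inter _ _)
      · exact isOpen_lt (by fun_prop) continuous_const
      · exact isOpen_Ioi.preimage continuous_fst
      · exact isOpen_Ioi.preimage continuous_snd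

lemma volume_triS (a b : ℝ) (ha : 0 < a) (hb : 0 < b)
    (hconv : Convex ℝ (triS a b)) :
    volume (triS a b) = ENNReal.ofReal (a * b / 2) := by
  have hfr : volume (frontier (triS a b)) = 0 := hconv.addHaar_frontier _
  have hvol_eq : volume (triS a b) = volume (interior (triS a b)) := by
    apply le_antisymm
    · calc volume (triS a b) ≤ volume (interior (triS a b) ∪ frontier (triS a b)) := by
            apply measure_mono
            rw [← closure_eq_interior_union_frontier]
            exact subset_closure
        _ ≤ volume (interior (triS a b)) + volume (frontier (triS a b)) := measure_union_le _ _
        _ = volume (interior (triS a b)) := by rw [hfr, add_zero]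
    · exact measure_mono interior_subset
  rw [hvol_eq, interior_triS a b ha hb]
  have hreg : triO a b = regionBetween (fun _ => (0:ℝ)) (fun x => b - b / a * x) (Ioo 0 a) := by
    ext p
    simp only [triO, regionBetween, mem_setOf_eq, mem_Ioo]
    constructor
    · rintro ⟨h1, h2, h3⟩
      have hp1a : p.1 < a := by nlinarith
      refine ⟨⟨h1, hp1a⟩, h2, ?_⟩
      rw [show b - b / a * p.1 = (a * b - b * p.1) / a by field_simp, lt_div_iff₀ ha]
      nlinarith
    · rintro ⟨⟨h1, h1'⟩, h2, h3⟩
      rw [show b - b / a * p.1 = (a * b - b * p.1) / a by field_simp, lt_div_iff₀ ha] at h3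
      exact ⟨h1, h2, by nlinarith⟩
  rw [hreg, MeasureTheory.Measure.volume_eq_prod]
  have hg : Continuous (fun x : ℝ => b - b / a * x) := by fun_prop
  have hgint : IntegrableOn (fun x : ℝ => b - b / a * x) (Ioo 0 a) :=
    (hg.integrableOn_Icc).mono_set Ioo_subset_Icc_self
  rw [volume_regionBetween_eq_integral (integrableOn_const measure_Ioo_lt_top.ne)
      hgint measurableSet_Ioo (fun x hx => by
        have h1 : b / a * x ≤ b / a * a := mul_le_mul_of_nonneg_left hx.2.le (by positivity)
        have h2 : b / a * a = b := by field_simp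
        linarith)]
  simp only [Pi.sub_apply, sub_zero]
  congr 1
  rw [← integral_Ioc_eq_integral_Ioo, ← intervalIntegral.integral_of_le ha.le]
  have hi1 : IntervalIntegrable (fun _ : ℝ => b) volume 0 a := intervalIntegrable_const
  have hi2 : IntervalIntegrable (fun x : ℝ => b / a * x) volume 0 a := by
    apply Continuous.intervalIntegrable; fun_prop
  rw [intervalIntegral.integral_sub hi1 hi2, intervalIntegral.integral_const,
    intervalIntegral.integral_const_mul, integral_id]
  simp only [smul_eq_mul, sub_zero]
  field_simp
  ring

lemma hull_eq_triS (a b : ℝ) (ha : 0 < a) (hb : 0 < b) :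
    convexHull ℝ {((0 : ℝ), (0 : ℝ)), (a, 0), (0, b)} = triS a b := by
  apply le_antisymm
  · apply convexHull_min
    · rintro p (rfl | rfl | rfl) <;> refine ⟨?_, ?_, ?_⟩ <;> simp <;> nlinarith
    · rintro p ⟨hp1, hp2, hp3⟩ q ⟨hq1, hq2, hq3⟩ s t hs ht hst
      simp only [triS, mem_setOf_eq, Prod.fst_add, Prod.snd_add, Prod.smul_fst,
        Prod.smul_snd, smul_eq_mul]
      have h1 := mul_le_mul_of_nonneg_left hp3 hs
      have h2 := mul_le_mul_of_nonneg_left hq3 ht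
      have h3 : s * (a * b) + t * (a * b) = a * b := by rw [← add_mul, hst, one_mul]
      refine ⟨by positivity, by positivity, by nlinarith⟩
  · rintro p ⟨hp1, hp2, hp3⟩
    set C := convexHull ℝ {((0 : ℝ), (0 : ℝ)), (a, 0), (0, b)} with hC
    have h0 : ((0:ℝ),(0:ℝ)) ∈ C := subset_convexHull ℝ _ (by simp)
    have hA : ((a:ℝ),(0:ℝ)) ∈ C := subset_convexHull ℝ _ (by simp)
    have hB : ((0:ℝ),(b:ℝ)) ∈ C := subset_convexHull ℝ _ (by simp)
    have hconv : Convex ℝ C := convex_convexHull ℝ _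
    obtain ⟨t, htdef⟩ : ∃ t : ℝ, t = p.1 / a + p.2 / b := ⟨_, rfl⟩
    have ht0 : 0 ≤ t := htdef ▸ by positivity
    have ht1 : t ≤ 1 := by
      rw [htdef, div_add_div _ _ (ne_of_gt ha) (ne_of_gt hb), div_le_one (by positivity)]
      nlinarith
    rcases eq_or_lt_of_le ht0 with h | h
    · have hd1 : 0 ≤ p.1 / a := by positivity
      have hd2 : 0 ≤ p.2 / b := by positivity
      have hsum : p.1 / a + p.2 / b = 0 := by linarith [htdef ▸ h.symm]
      have h1 : p.1 / a = 0 := by linarith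
      have h2 : p.2 / b = 0 := by linarith
      rw [div_eq_zero_iff] at h1 h2
      have : p = ((0:ℝ),(0:ℝ)) :=
        Prod.ext (h1.resolve_right (ne_of_gt ha)) (h2.resolve_right (ne_of_gt hb))
      rw [this]; exact h0
    · have htne : t ≠ 0 := ne_of_gt h
      have hqe : ((p.1 / t, p.2 / t) : ℝ × ℝ)
          = (p.1 / (t * a)) • ((a:ℝ),(0:ℝ)) + (p.2 / (t * b)) • ((0:ℝ),(b:ℝ)) := by
        simp only [Prod.smul_mk, Prod.mk_add_mk, smul_eq_mul, Prod.mk.injEq]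
        constructor <;> (field_simp; try ring)
      have hsum : p.1 / (t * a) + p.2 / (t * b) = 1 := by
        have e1 : p.1 / (t * a) + p.2 / (t * b) = (p.1 / a + p.2 / b) / t := by
          field_simp
        rw [e1, ← htdef, div_self htne]
      have hq : ((p.1 / t, p.2 / t) : ℝ × ℝ) ∈ C := by
        rw [hqe]
        exact hconv hA hB (by positivity) (by positivity) hsum
      have hpe : p = t • ((p.1 / t, p.2 / t) : ℝ × ℝ) + (1 - t) • ((0:ℝ),(0:ℝ)) := by
        have : p = (p.1, p.2) := rfl
        rw [this]
        simp only [Prod.smul_mk, Prod.mk_add_mk, smul_eq_mul, Prod.mk.injEq]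
        constructor <;> (field_simp; try ring)
      rw [hpe]
      exact hconv hq h0 ht0 (by linarith) (by ring)

theorem stmt0 (k l : ℤ) (hk : 1 ≤ k) (hl : 1 ≤ l) :
    (intPts (Tkl k l) : ℤ) = k ∧
      area (Tkl k l) = ((l : ℝ) + 1) ^ 2 * ((k : ℝ) + 1) / (2 * (l : ℝ)) := by
  have hlr : (1:ℝ) ≤ (l:ℝ) := by exact_mod_cast hl
  have hkr : (1:ℝ) ≤ (k:ℝ) := by exact_mod_cast hk
  have hl0 : (0:ℝ) < l := by linarith
  have hl1 : (0:ℝ) < (l:ℝ) + 1 := by linarith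
  set a : ℝ := 1 + 1 / (l:ℝ) with ha_def
  set b : ℝ := ((l:ℝ) + 1) * ((k:ℝ) + 1) with hb_def
  have ha : 0 < a := by rw [ha_def]; positivity
  have hb : 0 < b := by rw [hb_def]; positivity
  have key : ∀ x y : ℝ, (b * x + a * y < a * b) ↔
      (l:ℝ) * ((k:ℝ) + 1) * x + y < ((l:ℝ) + 1) * ((k:ℝ) + 1) := by
    intro x y
    have e1 : (b * x + a * y) * l = ((l:ℝ) + 1) * ((l:ℝ) * ((k:ℝ) + 1) * x + y) := by
      rw [ha_def, hb_def]; field_simp; try ring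
    have e2 : (a * b) * l = ((l:ℝ) + 1) * (((l:ℝ) + 1) * ((k:ℝ) + 1)) := by
      rw [ha_def, hb_def]; field_simp; try ring
    rw [← mul_lt_mul_iff_left₀ hl0, e1, e2, mul_lt_mul_iff_right₀ hl1]
  have keyZ : ∀ m n : ℤ, (b * (m:ℝ) + a * (n:ℝ) < a * b) ↔
      l * (k + 1) * m + n < (l + 1) * (k + 1) := by
    intro m n
    rw [key]
    constructor <;> intro h <;> exact_mod_cast h
  have hTkl : Tkl k l = triS a b := by
    rw [Tkl, show (1 + 1/(l:ℝ)) = a from ha_def.symm,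
      show ((l:ℝ)+1)*((k:ℝ)+1) = b from hb_def.symm]
    exact hull_eq_triS a b ha hb
  have hconv : Convex ℝ (triS a b) := by
    rw [← hull_eq_triS a b ha hb]; exact convex_convexHull ℝ _
  have hinj : Function.Injective (fun n : ℤ => (((1:ℝ), (n:ℝ)) : ℝ × ℝ)) := by
    intro x y h
    simp only [Prod.mk.injEq, true_and] at h
    exact_mod_cast h
  have hset : triO a b ∩ latticePts = (fun n : ℤ => (((1:ℝ), (n:ℝ)) : ℝ × ℝ)) '' (Set.Icc 1 k) := by
    ext p
    constructor
    · rintro ⟨⟨h1, h2, h3⟩, m, n, rfl⟩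
      simp only at h1 h2 h3
      have hm1 : 1 ≤ m := by exact_mod_cast h1
      have hn1 : 1 ≤ n := by exact_mod_cast h2
      have hz : l * (k + 1) * m + n < (l + 1) * (k + 1) := (keyZ m n).mp h3
      have hh3 : (l + 1) * (k + 1) = l * (k + 1) + (k + 1) := by ring
      have hm : m = 1 := by
        by_contra hne
        have h2m : 2 ≤ m := by omega
        have hh1 : l * (k + 1) * 2 ≤ l * (k + 1) * m :=
          mul_le_mul_of_nonneg_left h2m (by positivity)
        have hh2 : 1 * (k + 1) ≤ l * (k + 1) :=
          mul_le_mul_of_nonneg_right hl (by linarith)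
        linarith
      subst hm
      refine ⟨n, ⟨hn1, by linarith⟩, ?_⟩
      simp
    · rintro ⟨n, ⟨hn1, hnk⟩, rfl⟩
      refine ⟨⟨?_, ?_, ?_⟩, 1, n, by norm_num⟩
      · show (0:ℝ) < ((1:ℝ), (n:ℝ)).1
        norm_num
      · show (0:ℝ) < ((1:ℝ), (n:ℝ)).2
        have : (0:ℝ) < (n:ℝ) := by exact_mod_cast (by linarith : (0:ℤ) < n)
        exact this
      · show b * ((1:ℝ), (n:ℝ)).1 + a * ((1:ℝ), (n:ℝ)).2 < a * b
        have hz : l * (k + 1) * 1 + n < (l + 1) * (k + 1) := by nlinarith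
        have := (keyZ 1 n).mpr hz
        simpa using this
  constructor
  · rw [intPts, hTkl, interior_triS a b ha hb, hset,
      Set.ncard_image_of_injective _ hinj, ← Finset.coe_Icc, Set.ncard_coe_finset,
      Int.card_Icc]
    simp only [add_sub_cancel_right]
    omega
  · rw [area, hTkl, volume_triS a b ha hb hconv, ENNReal.toReal_ofReal (by positivity)]
    rw [ha_def, hb_def]
    field_simp
end
end

section
/- Let K ⊆ ℝ² be a planar convex body with lattice width direction (1,0) and π₁(K) = [x_l, x_r]. For any h with x_l ≤ h ≤ plvsl(K), the length of the vertical slice K ∩ {x₁ = h} is at least min((x_r − x_l)/2, h − x_l); symmetrically, for plvsl(K) ≤ h ≤ x_r it is at least min((x_r − x_l)/2, x_r − h). -/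
open MeasureTheory Set

noncomputable section

namespace Stmt4Aux

variable {K : Set (ℝ × ℝ)} {xl xr : ℝ}

/-- The vertical slice of `K` at abscissa `t`. -/
def slc (K : Set (ℝ × ℝ)) (t : ℝ) : Set ℝ := {y | (t, y) ∈ K}

def gbot (K : Set (ℝ × ℝ)) (t : ℝ) : ℝ := sInf (slc K t)
def gtop (K : Set (ℝ × ℝ)) (t : ℝ) : ℝ := sSup (slc K t)
def usup (K : Set (ℝ × ℝ)) (s : ℝ) : ℝ := sSup ((fun p : ℝ × ℝ => p.2 - s * p.1) '' K)
def linf (K : Set (ℝ × ℝ)) (s : ℝ) : ℝ := sInf ((fun p : ℝ × ℝ => p.2 - s * p.1) '' K)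

section Basics

variable (hK : IsConvexBody K) (hproj : Prod.fst '' K = Set.Icc xl xr)

include hK hproj

lemma hxlr : xl < xr := by
  obtain ⟨q, hq⟩ := hK.2.2
  obtain ⟨ε, hε, hball⟩ := Metric.isOpen_iff.1 isOpen_interior q hq
  have hmem : ∀ d : ℝ, |d| < ε → (q.1 + d, q.2) ∈ K := by
    intro d hd
    refine interior_subset (hball ?_)
    rw [Metric.mem_ball, Prod.dist_eq]
    apply max_lt
    · rw [Real.dist_eq]
      simpa using hd
    · simpa [dist_self] using hε
  have h1 := hmem (-(ε / 2)) (by rw [abs_neg, abs_of_pos (by linarith)]; linarith)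
  have h2 := hmem (ε / 2) (by rw [abs_of_pos (by linarith)]; linarith)
  have m1 : q.1 + -(ε / 2) ∈ Icc xl xr := by
    rw [← hproj]; exact ⟨_, h1, rfl⟩
  have m2 : q.1 + ε / 2 ∈ Icc xl xr := by
    rw [← hproj]; exact ⟨_, h2, rfl⟩
  have := m1.1; have := m2.2; linarith

lemma hKne : K.Nonempty := by
  obtain ⟨q, hq⟩ := hK.2.2
  exact ⟨q, interior_subset hq⟩

omit hK in
lemma mem_proj {p : ℝ × ℝ} (hp : p ∈ K) : p.1 ∈ Icc xl xr := by
  rw [← hproj]; exact ⟨p, hp, rfl⟩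

omit hK hproj in
lemma slc_convex (hc : Convex ℝ K) (t : ℝ) : Convex ℝ (slc K t) := by
  intro y1 h1 y2 h2 a b ha hb hab
  have := hc h1 h2 ha hb hab
  have he : a • ((t, y1) : ℝ × ℝ) + b • ((t, y2) : ℝ × ℝ) = (t, a • y1 + b • y2) := by
    simp only [Prod.smul_mk, smul_eq_mul, Prod.mk_add_mk, Prod.mk.injEq]
    constructor
    · linear_combination t * hab
    · trivial
  rw [he] at this
  exact this

omit hK hproj in
lemma slc_closed (hc : IsCompact K) (t : ℝ) : IsClosed (slc K t) := by
  have : slc K t = (fun y : ℝ => (t, y)) ⁻¹' K := rfl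
  rw [this]
  exact IsClosed.preimage (by fun_prop) hc.isClosed

omit hK hproj in
lemma slc_bddAbove (hc : IsCompact K) (t : ℝ) : BddAbove (slc K t) := by
  have hsub : slc K t ⊆ Prod.snd '' K := fun y hy => ⟨(t, y), hy, rfl⟩
  exact (hc.image continuous_snd).bddAbove.mono hsub

omit hK hproj in
lemma slc_bddBelow (hc : IsCompact K) (t : ℝ) : BddBelow (slc K t) := by
  have hsub : slc K t ⊆ Prod.snd '' K := fun y hy => ⟨(t, y), hy, rfl⟩
  exact (hc.image continuous_snd).bddBelow.mono hsub

omit hK in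
lemma slc_nonempty (ht : t ∈ Icc xl xr) : (slc K t).Nonempty := by
  rw [← hproj] at ht
  obtain ⟨p, hp, hpt⟩ := ht
  exact ⟨p.2, by rwa [slc, mem_setOf_eq, ← hpt]⟩

omit hproj in
lemma gtop_mem (hproj : Prod.fst '' K = Set.Icc xl xr) {t : ℝ} (ht : t ∈ Icc xl xr) :
    (t, gtop K t) ∈ K :=
  (slc_closed hK.1 t).csSup_mem (slc_nonempty hproj ht) (slc_bddAbove hK.1 t)

omit hproj in
lemma gbot_mem (hproj : Prod.fst '' K = Set.Icc xl xr) {t : ℝ} (ht : t ∈ Icc xl xr) :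
    (t, gbot K t) ∈ K :=
  (slc_closed hK.1 t).csInf_mem (slc_nonempty hproj ht) (slc_bddBelow hK.1 t)

lemma gbot_le_gtop {t : ℝ} (ht : t ∈ Icc xl xr) : gbot K t ≤ gtop K t :=
  csInf_le_csSup (slc_nonempty hproj ht) (slc_bddBelow hK.1 t) (slc_bddAbove hK.1 t)

lemma le_gtop {t : ℝ} {y : ℝ} (hy : (t, y) ∈ K) : y ≤ gtop K t :=
  le_csSup (slc_bddAbove hK.1 t) hy

lemma gbot_le {t : ℝ} {y : ℝ} (hy : (t, y) ∈ K) : gbot K t ≤ y :=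
  csInf_le (slc_bddBelow hK.1 t) hy

lemma slc_eq_Icc {t : ℝ} (ht : t ∈ Icc xl xr) :
    slc K t = Icc (gbot K t) (gtop K t) := by
  apply Subset.antisymm
  · intro y hy
    exact ⟨gbot_le hK hproj hy, le_gtop hK hproj hy⟩
  · exact ((slc_convex hK.2.1 t).ordConnected).out
      (gbot_mem hK hproj ht) (gtop_mem hK hproj ht)

lemma sliceLen_eq {t : ℝ} (ht : t ∈ Icc xl xr) :
    sliceLen K t = gtop K t - gbot K t := by
  have : {y : ℝ | (t, y) ∈ K} = Icc (gbot K t) (gtop K t) := slc_eq_Icc hK hproj ht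
  rw [sliceLen, this, Real.volume_Icc]
  exact ENNReal.toReal_ofReal (by linarith [gbot_le_gtop hK hproj ht])

omit hK hproj in
lemma sliceLen_nonneg (t : ℝ) : 0 ≤ sliceLen K t := ENNReal.toReal_nonneg

-- points with given abscissa
omit hK in
lemma exists_pt (ht : t ∈ Icc xl xr) : ∃ y, (t, y) ∈ K := by
  obtain ⟨y, hy⟩ := slc_nonempty hproj ht
  exact ⟨y, hy⟩

/-! ### The sheared support functions -/

omit hK hproj in
lemma usup_bdd (hc : IsCompact K) (s : ℝ) :
    BddAbove ((fun p : ℝ × ℝ => p.2 - s * p.1) '' K) :=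
  (hc.image (by fun_prop)).bddAbove

omit hK hproj in
lemma linf_bdd (hc : IsCompact K) (s : ℝ) :
    BddBelow ((fun p : ℝ × ℝ => p.2 - s * p.1) '' K) :=
  (hc.image (by fun_prop)).bddBelow

omit hproj in
lemma le_usup {s : ℝ} {p : ℝ × ℝ} (hp : p ∈ K) : p.2 - s * p.1 ≤ usup K s :=
  le_csSup (usup_bdd hK.1 s) ⟨p, hp, rfl⟩

omit hproj in
lemma linf_le {s : ℝ} {p : ℝ × ℝ} (hp : p ∈ K) : linf K s ≤ p.2 - s * p.1 :=
  csInf_le (linf_bdd hK.1 s) ⟨p, hp, rfl⟩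

lemma usup_le {s c : ℝ} (h : ∀ p ∈ K, p.2 - s * p.1 ≤ c) : usup K s ≤ c := by
  apply csSup_le ((hKne hK hproj).image _)
  rintro y ⟨p, hp, rfl⟩
  exact h p hp

lemma le_linf {s c : ℝ} (h : ∀ p ∈ K, c ≤ p.2 - s * p.1) : c ≤ linf K s := by
  apply le_csInf ((hKne hK hproj).image _)
  rintro y ⟨p, hp, rfl⟩
  exact h p hp

lemma hu1 : ∀ a b : ℝ, a ≤ b → usup K b ≤ usup K a - (b - a) * xl := by
  intro a b hab
  apply usup_le hK hproj
  intro p hp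
  have h1 : p.2 - a * p.1 ≤ usup K a := le_usup hK hp
  have h2 : xl ≤ p.1 := (mem_proj hproj hp).1
  nlinarith [mul_nonneg (sub_nonneg.2 hab) (sub_nonneg.2 h2)]

lemma hu2 : ∀ a b : ℝ, a ≤ b → usup K a - (b - a) * xr ≤ usup K b := by
  intro a b hab
  have : usup K a ≤ usup K b + (b - a) * xr := by
    apply usup_le hK hproj
    intro p hp
    have h1 : p.2 - b * p.1 ≤ usup K b := le_usup hK hp
    have h2 : p.1 ≤ xr := (mem_proj hproj hp).2
    nlinarith [mul_nonneg (sub_nonneg.2 hab) (sub_nonneg.2 h2)]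
  linarith

lemma hl1 : ∀ a b : ℝ, a ≤ b → linf K b ≤ linf K a - (b - a) * xl := by
  intro a b hab
  have : linf K b + (b - a) * xl ≤ linf K a := by
    apply le_linf hK hproj
    intro p hp
    have h1 : linf K b ≤ p.2 - b * p.1 := linf_le hK hp
    have h2 : xl ≤ p.1 := (mem_proj hproj hp).1
    nlinarith [mul_nonneg (sub_nonneg.2 hab) (sub_nonneg.2 h2)]
  linarith

lemma hl2 : ∀ a b : ℝ, a ≤ b → linf K a - (b - a) * xr ≤ linf K b := by
  intro a b hab
  apply le_linf hK hproj
  intro p hp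
  have h1 : linf K a ≤ p.2 - a * p.1 := linf_le hK hp
  have h2 : p.1 ≤ xr := (mem_proj hproj hp).2
  nlinarith [mul_nonneg (sub_nonneg.2 hab) (sub_nonneg.2 h2)]

end Basics



section Width

variable (hK : IsConvexBody K) (hproj : Prod.fst '' K = Set.Icc xl xr)

include hK hproj

lemma width_nonneg (v : ℝ × ℝ) : 0 ≤ width K v := by
  have hcont : Continuous (fun p : ℝ × ℝ => v.1 * p.1 + v.2 * p.2) := by fun_prop
  have hcomp : IsCompact ((fun p : ℝ × ℝ => v.1 * p.1 + v.2 * p.2) '' K) := hK.1.image hcont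
  have hne : ((fun p : ℝ × ℝ => v.1 * p.1 + v.2 * p.2) '' K).Nonempty :=
    (hKne hK hproj).image _
  exact sub_nonneg.2 (csInf_le_csSup hne hcomp.bddBelow hcomp.bddAbove)

lemma width_horiz : width K (1, 0) = xr - xl := by
  have hfun : (fun p : ℝ × ℝ => ((1:ℝ), (0:ℝ)).1 * p.1 + ((1:ℝ), (0:ℝ)).2 * p.2)
      = Prod.fst := by
    funext p; simp
  rw [width, hfun, hproj, csSup_Icc (hxlr hK hproj).le, csInf_Icc (hxlr hK hproj).le]

omit hK hproj in
lemma width_shear (n : ℤ) : width K (-(n:ℝ), 1) = usup K n - linf K n := by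
  have hfun : (fun p : ℝ × ℝ => (-(n:ℝ), (1:ℝ)).1 * p.1 + (-(n:ℝ), (1:ℝ)).2 * p.2)
      = fun p : ℝ × ℝ => p.2 - (n:ℝ) * p.1 := by
    funext p; simp; ring
  rw [width, hfun]; rfl

lemma gapn (hdir : width K (1, 0) = latticeWidth K) :
    ∀ n : ℤ, xr - xl ≤ usup K n - linf K n := by
  intro n
  have hbdd : BddBelow {w | ∃ v : ℤ × ℤ, v ≠ 0 ∧ w = width K ((v.1 : ℝ), (v.2 : ℝ))} := by
    refine ⟨0, ?_⟩
    rintro w ⟨v, hv, rfl⟩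
    exact width_nonneg hK hproj _
  have hmem : usup K n - linf K n
      ∈ {w | ∃ v : ℤ × ℤ, v ≠ 0 ∧ w = width K ((v.1 : ℝ), (v.2 : ℝ))} := by
    refine ⟨(-n, 1), by simp [Prod.ext_iff], ?_⟩
    have : (((-n : ℤ) : ℝ), ((1 : ℤ) : ℝ)) = (-(n:ℝ), (1:ℝ)) := by push_cast; rfl
    rw [this, width_shear]
  calc xr - xl = width K (1, 0) := (width_horiz hK hproj).symm
    _ = latticeWidth K := hdir
    _ ≤ usup K n - linf K n := csInf_le hbdd hmem

end Width

section Support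

variable (hK : IsConvexBody K) (hproj : Prod.fst '' K = Set.Icc xl xr)

include hK hproj

lemma combo_mem {A B : ℝ × ℝ} (hA : A ∈ K) (hB : B ∈ K) {θ : ℝ} (h0 : 0 ≤ θ) (h1 : θ ≤ 1) :
    ((1 - θ) * A.1 + θ * B.1, (1 - θ) * A.2 + θ * B.2) ∈ K := by
  have h := hK.2.1 hA hB (show (0:ℝ) ≤ 1 - θ by linarith) h0 (show (1 - θ) + θ = 1 by ring)
  have he : (1 - θ) • A + θ • B
      = (((1 - θ) * A.1 + θ * B.1, (1 - θ) * A.2 + θ * B.2) : ℝ × ℝ) := by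
    apply Prod.ext <;>
      simp [Prod.fst_add, Prod.snd_add, Prod.smul_fst, Prod.smul_snd, smul_eq_mul]
  rwa [he] at h

lemma gbot_lt_gtop {x₀ : ℝ} (hx : x₀ ∈ Ioo xl xr) : gbot K x₀ < gtop K x₀ := by
  obtain ⟨q, hq⟩ := hK.2.2
  obtain ⟨ε, hε, hball⟩ := Metric.isOpen_iff.1 isOpen_interior q hq
  have hqK : q ∈ K := interior_subset hq
  have hq1 : q.1 ∈ Icc xl xr := mem_proj hproj hqK
  have hmemv : ∀ d : ℝ, |d| < ε → (q.1, q.2 + d) ∈ K := by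
    intro d hd
    refine interior_subset (hball ?_)
    rw [Metric.mem_ball, Prod.dist_eq]
    apply max_lt
    · simpa [dist_self] using hε
    · rw [Real.dist_eq]; simpa using hd
  have hup : (q.1, q.2 + ε / 2) ∈ K := hmemv (ε / 2) (by rw [abs_of_pos (by linarith)]; linarith)
  have hdn : (q.1, q.2 - ε / 2) ∈ K := by
    have := hmemv (-(ε / 2)) (by rw [abs_neg, abs_of_pos (by linarith)]; linarith)
    simpa [sub_eq_add_neg] using this
  rcases lt_trichotomy x₀ q.1 with hlt | heq | hgt
  · obtain ⟨yl, hyl⟩ := exists_pt hproj (left_mem_Icc.2 (hxlr hK hproj).le)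
    have hq1l : xl < q.1 := lt_trans hx.1 hlt
    set θ := (x₀ - xl) / (q.1 - xl) with hθ
    have hθ0 : 0 < θ := div_pos (by have := hx.1; linarith) (by linarith)
    have hθ1 : θ ≤ 1 := by
      rw [div_le_one (by linarith)]; linarith
    have hc : θ * (q.1 - xl) = x₀ - xl := div_mul_cancel₀ _ (by linarith)
    have hx0 : (1 - θ) * xl + θ * q.1 = x₀ := by linear_combination hc
    have h1 : ((1 - θ) * xl + θ * q.1, (1 - θ) * yl + θ * (q.2 + ε / 2)) ∈ K := by
      simpa using combo_mem hK hproj hyl hup hθ0.le hθ1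
    have h2 : ((1 - θ) * xl + θ * q.1, (1 - θ) * yl + θ * (q.2 - ε / 2)) ∈ K := by
      simpa using combo_mem hK hproj hyl hdn hθ0.le hθ1
    rw [hx0] at h1 h2
    have t1 := le_gtop hK hproj h1
    have t2 := gbot_le hK hproj h2
    nlinarith
  · have h1 := le_gtop hK hproj (heq ▸ hup)
    have h2 := gbot_le hK hproj (heq ▸ hdn)
    linarith
  · obtain ⟨yr, hyr⟩ := exists_pt hproj (right_mem_Icc.2 (hxlr hK hproj).le)
    have hq1r : q.1 < xr := lt_trans hgt hx.2
    set θ := (x₀ - q.1) / (xr - q.1) with hθ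
    have hθ0 : 0 < θ := div_pos (by linarith) (by linarith)
    have hθ1 : θ < 1 := by
      rw [div_lt_one (by linarith)]
      have := hx.2; linarith
    have hc : θ * (xr - q.1) = x₀ - q.1 := div_mul_cancel₀ _ (by linarith)
    have hx0 : (1 - θ) * q.1 + θ * xr = x₀ := by linear_combination hc
    have h1 : ((1 - θ) * q.1 + θ * xr, (1 - θ) * (q.2 + ε / 2) + θ * yr) ∈ K := by
      simpa using combo_mem hK hproj hup hyr hθ0.le hθ1.le
    have h2 : ((1 - θ) * q.1 + θ * xr, (1 - θ) * (q.2 - ε / 2) + θ * yr) ∈ K := by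
      simpa using combo_mem hK hproj hdn hyr hθ0.le hθ1.le
    rw [hx0] at h1 h2
    have t1 := le_gtop hK hproj h1
    have t2 := gbot_le hK hproj h2
    nlinarith

lemma extend_support {φ : (ℝ × ℝ) →L[ℝ] ℝ} {P : ℝ × ℝ}
    (hφ : ∀ a ∈ interior K, φ a < φ P) : ∀ p ∈ K, φ p ≤ φ P := by
  obtain ⟨b₀, hb₀⟩ := hK.2.2
  intro p hp
  by_contra hcon
  push_neg at hcon
  set c := φ p - φ P with hc
  have hc0 : 0 < c := by simp [hc]; linarith
  set D := |φ b₀ - φ p| + 1 with hD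
  have hD0 : 0 < D := by positivity
  set t := min (1/2 : ℝ) (c / (2 * D)) with ht
  have ht0 : 0 < t := lt_min (by norm_num) (by positivity)
  have ht1 : t ≤ 1/2 := min_le_left _ _
  have htD : t * D ≤ c / 2 := by
    have h1 : t ≤ c / (2 * D) := min_le_right _ _
    have := mul_le_mul_of_nonneg_right h1 hD0.le
    calc t * D ≤ c / (2 * D) * D := this
      _ = c / 2 := by field_simp
  have hz : t • b₀ + (1 - t) • p ∈ interior K :=
    hK.2.1.combo_interior_closure_mem_interior hb₀ (subset_closure hp) ht0
      (by linarith) (by ring)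
  have hlt := hφ _ hz
  have hφz : φ (t • b₀ + (1 - t) • p) = t * φ b₀ + (1 - t) * φ p := by
    simp [map_add, _root_.map_smul, smul_eq_mul]
  rw [hφz] at hlt
  have habs : -(|φ b₀ - φ p|) ≤ φ b₀ - φ p := neg_abs_le _
  nlinarith [mul_le_mul_of_nonneg_left habs ht0.le]

lemma exists_support_top {x₀ : ℝ} (hx : x₀ ∈ Ioo xl xr) :
    ∃ s : ℝ, ∀ p ∈ K, p.2 - s * p.1 ≤ gtop K x₀ - s * x₀ := by
  have hxIcc : x₀ ∈ Icc xl xr := Ioo_subset_Icc_self hx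
  set P : ℝ × ℝ := (x₀, gtop K x₀) with hP
  have hPK : P ∈ K := gtop_mem hK hproj hxIcc
  have hPnotint : P ∉ interior K := by
    intro hint
    obtain ⟨ε, hε, hball⟩ := Metric.isOpen_iff.1 isOpen_interior P hint
    have hmem : (x₀, gtop K x₀ + ε / 2) ∈ K := by
      refine interior_subset (hball ?_)
      rw [Metric.mem_ball, Prod.dist_eq]
      apply max_lt
      · simpa [dist_self, hP] using hε
      · rw [Real.dist_eq]
        simpa [hP, abs_of_pos (by linarith : (0:ℝ) < ε/2)] using by linarith
    have := le_gtop hK hproj hmem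
    linarith
  obtain ⟨φ, hφ⟩ := geometric_hahn_banach_open_point hK.2.1.interior isOpen_interior hPnotint
  have hφK : ∀ p ∈ K, φ p ≤ φ P := extend_support hK hproj hφ
  set a := φ (1, 0) with ha
  set b := φ (0, 1) with hb
  have hdecomp : ∀ p : ℝ × ℝ, φ p = a * p.1 + b * p.2 := by
    intro p
    have hpe : p = p.1 • ((1:ℝ), (0:ℝ)) + p.2 • ((0:ℝ), (1:ℝ)) := by
      apply Prod.ext <;> simp
    conv_lhs => rw [hpe]
    simp only [map_add, _root_.map_smul, smul_eq_mul]
    ring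
  have hglt := gbot_lt_gtop hK hproj hx
  have hbnn : 0 ≤ b := by
    have hmem : (x₀, gbot K x₀) ∈ K := gbot_mem hK hproj hxIcc
    have := hφK _ hmem
    rw [hdecomp, hdecomp] at this
    simp only [hP] at this
    nlinarith
  have hbne : b ≠ 0 := by
    intro hb0
    obtain ⟨yl, hyl⟩ := exists_pt hproj (left_mem_Icc.2 (hxlr hK hproj).le)
    obtain ⟨yr, hyr⟩ := exists_pt hproj (right_mem_Icc.2 (hxlr hK hproj).le)
    have h1 := hφK _ hyl
    have h2 := hφK _ hyr
    rw [hdecomp, hdecomp] at h1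
    rw [hdecomp, hdecomp] at h2
    simp only [hb0, hP] at h1 h2
    have hxl := hx.1
    have hxr := hx.2
    have ha0 : a = 0 := by nlinarith
    obtain ⟨q, hq⟩ := hK.2.2
    have := hφ q hq
    rw [hdecomp, hdecomp] at this
    simp only [hb0, ha0, hP] at this
    linarith
  have hbpos : 0 < b := lt_of_le_of_ne hbnn (Ne.symm hbne)
  refine ⟨-a / b, fun p hp => ?_⟩
  have h := hφK p hp
  rw [hdecomp, hdecomp] at h
  simp only [hP] at h
  have h2 : (a * p.1 + b * p.2) / b ≤ (a * x₀ + b * gtop K x₀) / b :=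
    div_le_div_of_nonneg_right h hbpos.le
  calc p.2 - -a / b * p.1 = (a * p.1 + b * p.2) / b := by field_simp; ring
    _ ≤ (a * x₀ + b * gtop K x₀) / b := h2
    _ = gtop K x₀ - -a / b * x₀ := by field_simp; ring


lemma exists_support_bot {x₀ : ℝ} (hx : x₀ ∈ Ioo xl xr) :
    ∃ s : ℝ, ∀ p ∈ K, gbot K x₀ - s * x₀ ≤ p.2 - s * p.1 := by
  have hxIcc : x₀ ∈ Icc xl xr := Ioo_subset_Icc_self hx
  set P : ℝ × ℝ := (x₀, gbot K x₀) with hP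
  have hPK : P ∈ K := gbot_mem hK hproj hxIcc
  have hPnotint : P ∉ interior K := by
    intro hint
    obtain ⟨ε, hε, hball⟩ := Metric.isOpen_iff.1 isOpen_interior P hint
    have hmem : (x₀, gbot K x₀ - ε / 2) ∈ K := by
      refine interior_subset (hball ?_)
      rw [Metric.mem_ball, Prod.dist_eq]
      apply max_lt
      · simpa [dist_self, hP] using hε
      · rw [Real.dist_eq]
        have : gbot K x₀ - ε / 2 - gbot K x₀ = -(ε / 2) := by ring
        rw [this, abs_neg, abs_of_pos (by linarith : (0:ℝ) < ε/2)]
        linarith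
    have := gbot_le hK hproj hmem
    linarith
  obtain ⟨φ, hφ⟩ := geometric_hahn_banach_open_point hK.2.1.interior isOpen_interior hPnotint
  have hφK : ∀ p ∈ K, φ p ≤ φ P := extend_support hK hproj hφ
  set a := φ (1, 0) with ha
  set b := φ (0, 1) with hb
  have hdecomp : ∀ p : ℝ × ℝ, φ p = a * p.1 + b * p.2 := by
    intro p
    have hpe : p = p.1 • ((1:ℝ), (0:ℝ)) + p.2 • ((0:ℝ), (1:ℝ)) := by
      apply Prod.ext <;> simp
    conv_lhs => rw [hpe]
    simp only [map_add, _root_.map_smul, smul_eq_mul]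
    ring
  have hglt := gbot_lt_gtop hK hproj hx
  have hbnp : b ≤ 0 := by
    have hmem : (x₀, gtop K x₀) ∈ K := gtop_mem hK hproj hxIcc
    have := hφK _ hmem
    rw [hdecomp, hdecomp] at this
    simp only [hP] at this
    nlinarith
  have hbne : b ≠ 0 := by
    intro hb0
    obtain ⟨yl, hyl⟩ := exists_pt hproj (left_mem_Icc.2 (hxlr hK hproj).le)
    obtain ⟨yr, hyr⟩ := exists_pt hproj (right_mem_Icc.2 (hxlr hK hproj).le)
    have h1 := hφK _ hyl
    have h2 := hφK _ hyr
    rw [hdecomp, hdecomp] at h1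
    rw [hdecomp, hdecomp] at h2
    simp only [hb0, hP] at h1 h2
    have hxl := hx.1
    have hxr := hx.2
    have ha0 : a = 0 := by nlinarith
    obtain ⟨q, hq⟩ := hK.2.2
    have := hφ q hq
    rw [hdecomp, hdecomp] at this
    simp only [hb0, ha0, hP] at this
    linarith
  have hbneg : b < 0 := lt_of_le_of_ne hbnp hbne
  refine ⟨-a / b, fun p hp => ?_⟩
  have h := hφK p hp
  rw [hdecomp, hdecomp] at h
  simp only [hP] at h
  have h2 : (a * p.1 + b * p.2) / (-b) ≤ (a * x₀ + b * gbot K x₀) / (-b) :=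
    div_le_div_of_nonneg_right h (by linarith)
  calc gbot K x₀ - -a / b * x₀ = (a * x₀ + b * gbot K x₀) / b := by field_simp; ring
    _ = -((a * x₀ + b * gbot K x₀) / (-b)) := by rw [div_neg, neg_neg]
    _ ≤ -((a * p.1 + b * p.2) / (-b)) := by linarith
    _ = (a * p.1 + b * p.2) / b := by rw [div_neg, neg_neg]
    _ = p.2 - -a / b * p.1 := by field_simp; ring

end Support

/-- Core analytic lemma: lower bound on chord-expressions from integer width bounds. -/
lemma core (u l : ℝ → ℝ) (xl xr x₀ s s' : ℝ)
    (hu1 : ∀ a b : ℝ, a ≤ b → u b ≤ u a - (b - a) * xl)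
    (hu2 : ∀ a b : ℝ, a ≤ b → u a - (b - a) * xr ≤ u b)
    (hl1 : ∀ a b : ℝ, a ≤ b → l b ≤ l a - (b - a) * xl)
    (hl2 : ∀ a b : ℝ, a ≤ b → l a - (b - a) * xr ≤ l b)
    (hgap : ∀ n : ℤ, xr - xl ≤ u n - l n)
    (hx1 : xl ≤ x₀) (hx2 : x₀ ≤ xr) (hd : |s - s'| ≤ 1) :
    min (min (x₀ - xl) (xr - x₀)) ((xr - xl) / 2) ≤ u s - l s' + (s - s') * x₀ := by
  have hw : (0:ℝ) ≤ xr - xl := by linarith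
  -- general gap estimate at any real slope
  have gap : ∀ (σ : ℝ) (n : ℤ), (xr - xl) * (1 - |σ - (n:ℝ)|) ≤ u σ - l σ := by
    intro σ n
    rcases le_total σ (n:ℝ) with hσ | hσ
    · have h1 := hu1 σ n hσ
      have h2 := hl2 σ n hσ
      have h3 := hgap n
      have habs : |σ - (n:ℝ)| = (n:ℝ) - σ := by
        rw [abs_sub_comm]; exact abs_of_nonneg (by linarith)
      rw [habs]; nlinarith
    · have h1 := hu2 n σ hσ
      have h2 := hl1 n σ hσ
      have h3 := hgap n
      have habs : |σ - (n:ℝ)| = σ - (n:ℝ) := abs_of_nonneg (by linarith)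
      rw [habs]; nlinarith
  have hm1 : min (min (x₀ - xl) (xr - x₀)) ((xr - xl) / 2) ≤ x₀ - xl :=
    le_trans (min_le_left _ _) (min_le_left _ _)
  have hm2 : min (min (x₀ - xl) (xr - x₀)) ((xr - xl) / 2) ≤ xr - x₀ :=
    le_trans (min_le_left _ _) (min_le_right _ _)
  have hm3 : min (min (x₀ - xl) (xr - x₀)) ((xr - xl) / 2) ≤ (xr - xl) / 2 :=
    min_le_right _ _
  rcases le_total s' s with hss | hss
  · -- d = s - s' ∈ [0, 1]
    have hd1 : s - s' ≤ 1 := (abs_le.1 hd).2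
    set n : ℤ := ⌈s'⌉ with hn
    rcases le_or_gt (n:ℝ) s with hns | hns
    · -- integer n ∈ [s', s]
      have h1 := hu2 n s hns
      have h2 := hl2 s' n (Int.le_ceil s')
      have h3 := hgap n
      have hq : (1 - (s - s')) * (xr - x₀) ≥ 0 :=
        mul_nonneg (by linarith) (by linarith)
      refine le_trans hm1 ?_
      nlinarith
    ·
      have hn1 : (n:ℝ) < s' + 1 := by
        have := Int.ceil_lt_add_one s'
        exact_mod_cast this
      have g1 := gap s n
      have g2 := gap s' (n - 1)
      have ha1 : |s - (n:ℝ)| = (n:ℝ) - s := by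
        rw [abs_sub_comm]; exact abs_of_nonneg (by linarith)
      have ha2 : |s' - ((n - 1 : ℤ):ℝ)| = s' - ((n:ℝ) - 1) := by
        push_cast
        exact abs_of_nonneg (by linarith)
      rw [ha1] at g1
      rw [ha2] at g2
      push_cast at g2
      -- chains
      have c1 : l s' ≤ l s + (s - s') * xr := by
        have := hl2 s' s hss; linarith
      have c2 : u s' - (s - s') * xr ≤ u s := hu2 s' s hss
      -- T ≥ (u-l)(s) - d(xr-x₀) and T ≥ (u-l)(s') - d(xr-x₀); average.
      rcases le_total (xr - x₀) ((xr - xl) / 2) with hc | hc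
      · refine le_trans hm3 ?_
        have hq : (s - s') * ((xr - xl) / 2 - (xr - x₀)) ≥ 0 :=
          mul_nonneg (by linarith) (by linarith)
        nlinarith
      · refine le_trans hm1 ?_
        have hq : (1 - (s - s')) * ((xr - x₀) - (xr - xl) / 2) ≥ 0 :=
          mul_nonneg (by linarith) (by linarith)
        nlinarith
  · -- d = s - s' ∈ [-1, 0]
    have hd1 : s' - s ≤ 1 := by
      have := (abs_le.1 hd).1; linarith
    set n : ℤ := ⌊s'⌋ with hn
    rcases le_or_gt s (n:ℝ) with hns | hns
    · -- integer n ∈ [s, s']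
      have h1 := hu1 s n hns
      have h2 := hl1 n s' (Int.floor_le s')
      have h3 := hgap n
      have hq : (1 - (s' - s)) * (x₀ - xl) ≥ 0 :=
        mul_nonneg (by linarith) (by linarith)
      refine le_trans hm2 ?_
      nlinarith
    · -- no integer in [s, s'] : n < s ≤ s' < n + 1
      have hn1 : s' - 1 < (n:ℝ) := by
        have := Int.sub_one_lt_floor s'
        exact_mod_cast this
      have g1 := gap s n
      have g2 := gap s' (n + 1)
      have ha1 : |s - (n:ℝ)| = s - (n:ℝ) := abs_of_nonneg (by linarith)
      have ha2 : |s' - ((n + 1 : ℤ):ℝ)| = ((n:ℝ) + 1) - s' := by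
        push_cast
        rw [abs_sub_comm]; exact abs_of_nonneg (by linarith)
      rw [ha1] at g1
      rw [ha2] at g2
      push_cast at g2
      have c1 : u s' + (s' - s) * xl ≤ u s := by
        have := hu1 s s' hss; linarith
      have c2 : l s' ≤ l s - (s' - s) * xl := hl1 s s' hss
      rcases le_total (x₀ - xl) ((xr - xl) / 2) with hc | hc
      · refine le_trans hm3 ?_
        have hq : (s' - s) * ((xr - xl) / 2 - (x₀ - xl)) ≥ 0 :=
          mul_nonneg (by linarith) (by linarith)
        nlinarith
      · refine le_trans hm2 ?_
        have hq : (1 - (s' - s)) * ((x₀ - xl) - (xr - xl) / 2) ≥ 0 :=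
          mul_nonneg (by linarith) (by linarith)
        nlinarith


section Star

variable (hK : IsConvexBody K) (hproj : Prod.fst '' K = Set.Icc xl xr)
  (hdir : width K (1, 0) = latticeWidth K)

include hK hproj hdir

lemma star {x₀ : ℝ} (hx : x₀ ∈ Icc xl xr) :
    min (min (x₀ - xl) (xr - x₀)) ((xr - xl) / 2) ≤ gtop K x₀ - gbot K x₀ := by
  have hge := gbot_le_gtop hK hproj hx
  rcases eq_or_lt_of_le hx.1 with heq | hlt
  · refine le_trans (le_trans (min_le_left _ _) (min_le_left _ _)) ?_
    linarith
  rcases eq_or_lt_of_le hx.2 with heq2 | hlt2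
  · refine le_trans (le_trans (min_le_left _ _) (min_le_right _ _)) ?_
    linarith
  obtain ⟨s, hs⟩ := exists_support_top hK hproj ⟨hlt, hlt2⟩
  obtain ⟨s', hs'⟩ := exists_support_bot hK hproj ⟨hlt, hlt2⟩
  rcases le_or_gt (s - s') 1 with hd1 | hd1
  · rcases le_or_gt (-1) (s - s') with hd2 | hd2
    · -- |s - s'| ≤ 1 : use the core analytic lemma
      have habs : |s - s'| ≤ 1 := abs_le.2 ⟨hd2, hd1⟩
      have hA1 : usup K s ≤ gtop K x₀ - s * x₀ := usup_le hK hproj hs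
      have hA2 : gtop K x₀ - s * x₀ ≤ usup K s := le_usup hK (gtop_mem hK hproj hx)
      have hB1 : gbot K x₀ - s' * x₀ ≤ linf K s' := le_linf hK hproj hs'
      have hB2 : linf K s' ≤ gbot K x₀ - s' * x₀ := linf_le hK (gbot_mem hK hproj hx)
      have hcore := core (usup K) (linf K) xl xr x₀ s s' (hu1 hK hproj) (hu2 hK hproj)
        (hl1 hK hproj) (hl2 hK hproj) (gapn hK hproj hdir) hx.1 hx.2 habs
      linarith
    · -- s - s' < -1 : slices open up towards the right
      have hxrIcc : xr ∈ Icc xl xr := right_mem_Icc.2 (hxlr hK hproj).le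
      have h1 := hs _ (gtop_mem hK hproj hxrIcc)
      have h2 := hs' _ (gbot_mem hK hproj hxrIcc)
      have h3 := gbot_le_gtop hK hproj hxrIcc
      refine le_trans (le_trans (min_le_left _ _) (min_le_right _ _)) ?_
      simp only at h1 h2
      nlinarith [mul_nonneg (by linarith : (0:ℝ) ≤ s' - s - 1) (by linarith : (0:ℝ) ≤ xr - x₀)]
  · -- s - s' > 1 : slices open up towards the left
    have hxlIcc : xl ∈ Icc xl xr := left_mem_Icc.2 (hxlr hK hproj).le
    have h1 := hs _ (gtop_mem hK hproj hxlIcc)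
    have h2 := hs' _ (gbot_mem hK hproj hxlIcc)
    have h3 := gbot_le_gtop hK hproj hxlIcc
    refine le_trans (le_trans (min_le_left _ _) (min_le_left _ _)) ?_
    simp only at h1 h2
    nlinarith [mul_nonneg (by linarith : (0:ℝ) ≤ s - s' - 1) (by linarith : (0:ℝ) ≤ x₀ - xl)]

end Star

section Assemble

variable (hK : IsConvexBody K) (hproj : Prod.fst '' K = Set.Icc xl xr)

include hK hproj

lemma quasiconcave {a b c : ℝ} (hA : a ∈ Icc xl xr) (hB : b ∈ Icc xl xr)
    (hac : a ≤ c) (hcb : c ≤ b) :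
    min (gtop K a - gbot K a) (gtop K b - gbot K b) ≤ gtop K c - gbot K c := by
  rcases eq_or_lt_of_le (hac.trans hcb) with heq | hab
  · have hca : c = a := le_antisymm (heq ▸ hcb) hac
    have hcb' : c = b := by rw [hca, heq]
    rw [← hca, ← hcb']
    exact min_le_left _ _
  · set θ := (c - a) / (b - a) with hθ
    have hθ0 : 0 ≤ θ := div_nonneg (by linarith) (by linarith)
    have hθ1 : θ ≤ 1 := by
      rw [div_le_one (by linarith)]; linarith
    have hcc : θ * (b - a) = c - a := div_mul_cancel₀ _ (by linarith)
    have hc : (1 - θ) * a + θ * b = c := by linear_combination hcc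
    have htop : ((1 - θ) * a + θ * b, (1 - θ) * gtop K a + θ * gtop K b) ∈ K := by
      simpa using combo_mem hK hproj (gtop_mem hK hproj hA) (gtop_mem hK hproj hB) hθ0 hθ1
    have hbot : ((1 - θ) * a + θ * b, (1 - θ) * gbot K a + θ * gbot K b) ∈ K := by
      simpa using combo_mem hK hproj (gbot_mem hK hproj hA) (gbot_mem hK hproj hB) hθ0 hθ1
    rw [hc] at htop hbot
    have t1 := le_gtop hK hproj htop
    have t2 := gbot_le hK hproj hbot
    have m1 : min (gtop K a - gbot K a) (gtop K b - gbot K b) ≤ gtop K a - gbot K a :=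
      min_le_left _ _
    have m2 : min (gtop K a - gbot K a) (gtop K b - gbot K b) ≤ gtop K b - gbot K b :=
      min_le_right _ _
    nlinarith [mul_le_mul_of_nonneg_left m1 (by linarith : (0:ℝ) ≤ 1 - θ),
      mul_le_mul_of_nonneg_left m2 hθ0]

lemma exists_max : ∃ t₀ ∈ Icc xl xr,
    ∀ t ∈ Icc xl xr, gtop K t - gbot K t ≤ gtop K t₀ - gbot K t₀ := by
  set D : Set ((ℝ × ℝ) × (ℝ × ℝ)) := (K ×ˢ K) ∩ {pq | pq.1.1 = pq.2.1} with hD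
  have hDc : IsCompact D :=
    (hK.1.prod hK.1).inter_right (isClosed_eq (by fun_prop) (by fun_prop))
  have hDne : D.Nonempty := by
    obtain ⟨p, hp⟩ := hKne hK hproj
    exact ⟨(p, p), ⟨⟨hp, hp⟩, rfl⟩⟩
  obtain ⟨mp, hmD, hmax⟩ := hDc.exists_isMaxOn hDne
    ((Continuous.continuousOn (by fun_prop : Continuous
      fun pq : (ℝ × ℝ) × (ℝ × ℝ) => pq.1.2 - pq.2.2)))
  refine ⟨mp.1.1, mem_proj hproj hmD.1.1, ?_⟩
  intro t ht
  have h1 : ((t, gtop K t), (t, gbot K t)) ∈ D := ⟨⟨gtop_mem hK hproj ht, gbot_mem hK hproj ht⟩, rfl⟩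
  have h2 := hmax h1
  simp only at h2
  have h3 : mp.1.2 ≤ gtop K mp.1.1 := le_gtop hK hproj hmD.1.1
  have h4 : gbot K mp.1.1 ≤ mp.2.2 := by
    apply gbot_le hK hproj
    have he : (mp.1.1, mp.2.2) = mp.2 := by
      have := hmD.2
      simp only [mem_setOf_eq] at this
      rw [this]
    rw [he]
    exact hmD.1.2
  exact le_trans h2 (by linarith)

lemma maxpos_nonempty : (maxSlicePos K).Nonempty := by
  obtain ⟨t₀, ht₀, hmax⟩ := exists_max hK hproj
  refine ⟨t₀, ?_, ?_⟩
  · rw [hproj]; exact ht₀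
  · intro t ht
    rw [hproj] at ht
    rw [sliceLen_eq hK hproj ht, sliceLen_eq hK hproj ht₀]
    exact hmax t ht

omit hK in
lemma maxpos_subset : maxSlicePos K ⊆ Icc xl xr := by
  intro t ht
  rw [← hproj]
  exact ht.1

end Assemble


section Main

variable (hK : IsConvexBody K) (hproj : Prod.fst '' K = Set.Icc xl xr)
  (hdir : width K (1, 0) = latticeWidth K)

include hK hproj hdir

lemma clause1 : ∀ h : ℝ, xl ≤ h → h ≤ plvsl K →
    min ((xr - xl) / 2) (h - xl) ≤ sliceLen K h := by
  intro h h1 h2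
  have hAne := maxpos_nonempty hK hproj
  have hAsub := maxpos_subset (K := K) hproj
  have hbddA : BddAbove (maxSlicePos K) := bddAbove_Icc.mono hAsub
  have hbddB : BddBelow (maxSlicePos K) := bddBelow_Icc.mono hAsub
  have hsup_le : sSup (maxSlicePos K) ≤ xr := csSup_le hAne fun t ht => (hAsub ht).2
  have hinf_ge : xl ≤ sInf (maxSlicePos K) := le_csInf hAne fun t ht => (hAsub ht).1
  have hinfsup : sInf (maxSlicePos K) ≤ sSup (maxSlicePos K) :=
    csInf_le_csSup hAne hbddB hbddA
  have hplvsl_le : plvsl K ≤ sSup (maxSlicePos K) := by rw [plvsl]; linarith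
  have hhxr : h ≤ xr := le_trans h2 (le_trans hplvsl_le hsup_le)
  have hhIcc : h ∈ Icc xl xr := ⟨h1, hhxr⟩
  have hw := hxlr hK hproj
  rw [sliceLen_eq hK hproj hhIcc]
  set m := min ((xr - xl) / 2) (h - xl) with hm
  have hm1 : m ≤ (xr - xl) / 2 := min_le_left _ _
  have hm2 : m ≤ h - xl := min_le_right _ _
  have hm0 : 0 ≤ m := le_min (by linarith) (by linarith)
  rcases le_or_gt m (xr - h) with hc | hc
  · have hstar := star hK hproj hdir hhIcc
    have hmm : m ≤ min (min (h - xl) (xr - h)) ((xr - xl) / 2) :=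
      le_min (le_min hm2 hc) hm1
    linarith
  · set x₁ := xr - m with hx₁
    have hx₁Icc : x₁ ∈ Icc xl xr := ⟨by linarith, by linarith⟩
    have hstar := star hK hproj hdir hx₁Icc
    have hfx₁ : m ≤ gtop K x₁ - gbot K x₁ :=
      le_trans (le_min (le_min (by linarith) (by linarith)) (by linarith)) hstar
    have hx₁h : x₁ ≤ h := by linarith
    rcases lt_or_ge h (sSup (maxSlicePos K)) with hlt | hge
    · obtain ⟨ts, htsA, hhts⟩ := exists_lt_of_lt_csSup hAne hlt
      have htsIcc := hAsub htsA
      have hcon := quasiconcave hK hproj hx₁Icc htsIcc hx₁h hhts.le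
      have hFt : gtop K x₁ - gbot K x₁ ≤ gtop K ts - gbot K ts := by
        have hcmp := htsA.2 x₁ (by rw [hproj]; exact hx₁Icc)
        rwa [sliceLen_eq hK hproj hx₁Icc, sliceLen_eq hK hproj htsIcc] at hcmp
      calc m ≤ gtop K x₁ - gbot K x₁ := hfx₁
        _ = min (gtop K x₁ - gbot K x₁) (gtop K ts - gbot K ts) := (min_eq_left hFt).symm
        _ ≤ _ := hcon
    · have hsup_eq : sSup (maxSlicePos K) = h := le_antisymm hge (h2.trans hplvsl_le)
      have hss : sSup (maxSlicePos K) ≤ sInf (maxSlicePos K) := by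
        rw [plvsl] at h2; linarith
      obtain ⟨t₀, ht₀⟩ := hAne
      have ht1 : t₀ ≤ h := by
        have := le_csSup hbddA ht₀; linarith
      have ht2 : h ≤ t₀ := by
        have := csInf_le hbddB ht₀; linarith
      have hteq : t₀ = h := le_antisymm ht1 ht2
      have hhA : h ∈ maxSlicePos K := hteq ▸ ht₀
      have hcmp := hhA.2 x₁ (by rw [hproj]; exact hx₁Icc)
      rw [sliceLen_eq hK hproj hx₁Icc, sliceLen_eq hK hproj hhIcc] at hcmp
      linarith

lemma clause2 : ∀ h : ℝ, plvsl K ≤ h → h ≤ xr →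
    min ((xr - xl) / 2) (xr - h) ≤ sliceLen K h := by
  intro h h2 h1
  have hAne := maxpos_nonempty hK hproj
  have hAsub := maxpos_subset (K := K) hproj
  have hbddA : BddAbove (maxSlicePos K) := bddAbove_Icc.mono hAsub
  have hbddB : BddBelow (maxSlicePos K) := bddBelow_Icc.mono hAsub
  have hsup_le : sSup (maxSlicePos K) ≤ xr := csSup_le hAne fun t ht => (hAsub ht).2
  have hinf_ge : xl ≤ sInf (maxSlicePos K) := le_csInf hAne fun t ht => (hAsub ht).1
  have hinfsup : sInf (maxSlicePos K) ≤ sSup (maxSlicePos K) :=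
    csInf_le_csSup hAne hbddB hbddA
  have hplvsl_ge : sInf (maxSlicePos K) ≤ plvsl K := by rw [plvsl]; linarith
  have hhxl : xl ≤ h := le_trans hinf_ge (le_trans hplvsl_ge h2)
  have hhIcc : h ∈ Icc xl xr := ⟨hhxl, h1⟩
  have hw := hxlr hK hproj
  rw [sliceLen_eq hK hproj hhIcc]
  set m := min ((xr - xl) / 2) (xr - h) with hm
  have hm1 : m ≤ (xr - xl) / 2 := min_le_left _ _
  have hm2 : m ≤ xr - h := min_le_right _ _
  have hm0 : 0 ≤ m := le_min (by linarith) (by linarith)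
  rcases le_or_gt m (h - xl) with hc | hc
  · have hstar := star hK hproj hdir hhIcc
    have hmm : m ≤ min (min (h - xl) (xr - h)) ((xr - xl) / 2) :=
      le_min (le_min hc hm2) hm1
    linarith
  · set x₁ := xl + m with hx₁
    have hx₁Icc : x₁ ∈ Icc xl xr := ⟨by linarith, by linarith⟩
    have hstar := star hK hproj hdir hx₁Icc
    have hfx₁ : m ≤ gtop K x₁ - gbot K x₁ :=
      le_trans (le_min (le_min (by linarith) (by linarith)) (by linarith)) hstar
    have hx₁h : h ≤ x₁ := by linarith
    rcases lt_or_ge (sInf (maxSlicePos K)) h with hlt | hge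
    · obtain ⟨ts, htsA, hhts⟩ := exists_lt_of_csInf_lt hAne hlt
      have htsIcc := hAsub htsA
      have hcon := quasiconcave hK hproj htsIcc hx₁Icc hhts.le hx₁h
      have hFt : gtop K x₁ - gbot K x₁ ≤ gtop K ts - gbot K ts := by
        have hcmp := htsA.2 x₁ (by rw [hproj]; exact hx₁Icc)
        rwa [sliceLen_eq hK hproj hx₁Icc, sliceLen_eq hK hproj htsIcc] at hcmp
      calc m ≤ gtop K x₁ - gbot K x₁ := hfx₁
        _ = min (gtop K ts - gbot K ts) (gtop K x₁ - gbot K x₁) := (min_eq_right hFt).symm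
        _ ≤ _ := hcon
    · have hinf_eq : sInf (maxSlicePos K) = h := le_antisymm (hplvsl_ge.trans h2) hge
      have hss : sSup (maxSlicePos K) ≤ sInf (maxSlicePos K) := by
        rw [plvsl] at h2; linarith
      obtain ⟨t₀, ht₀⟩ := hAne
      have ht1 : t₀ ≤ h := by
        have := le_csSup hbddA ht₀; linarith
      have ht2 : h ≤ t₀ := by
        have := csInf_le hbddB ht₀; linarith
      have hteq : t₀ = h := le_antisymm ht1 ht2
      have hhA : h ∈ maxSlicePos K := hteq ▸ ht₀
      have hcmp := hhA.2 x₁ (by rw [hproj]; exact hx₁Icc)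
      rw [sliceLen_eq hK hproj hx₁Icc, sliceLen_eq hK hproj hhIcc] at hcmp
      linarith

end Main


end Stmt4Aux

theorem stmt4 (K : Set (ℝ × ℝ)) (hK : IsConvexBody K) (xl xr : ℝ)
    (hproj : Prod.fst '' K = Set.Icc xl xr)
    (hdir : width K (1, 0) = latticeWidth K) :
    (∀ h : ℝ, xl ≤ h → h ≤ plvsl K →
        min ((xr - xl) / 2) (h - xl) ≤ sliceLen K h) ∧
      (∀ h : ℝ, plvsl K ≤ h → h ≤ xr →
        min ((xr - xl) / 2) (xr - h) ≤ sliceLen K h) :=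
  ⟨Stmt4Aux.clause1 hK hproj hdir, Stmt4Aux.clause2 hK hproj hdir⟩
end
end

section
/- Let K ⊆ ℝ² be a convex body with lattice width direction (1,0), with π₁(K) = [1−a, 1+b] for some 0 < a, b ≤ 1, such that the position of the longest vertical slicing length satisfies plvsl(K) ≤ 1, and let k = |int(K) ∩ ℤ²|. Then area(K) ≤ (a+b)²(k+1)/(2b) if a > b, and area(K) ≤ (a+b)(k+1) ≤ 2(k+1) if a ≤ b. -/
open MeasureTheory Set

noncomputable section

lemma combo_pt (x1 y1 x2 y2 α β : ℝ) :
    α • ((x1, y1) : ℝ × ℝ) + β • (x2, y2) = (α * x1 + β * x2, α * y1 + β * y2) := by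
  simp [Prod.ext_iff, smul_eq_mul]

lemma slice_compact {K : Set (ℝ × ℝ)} (hKc : IsCompact K) (t : ℝ) :
    IsCompact {y | (t, y) ∈ K} := by
  apply IsCompact.of_isClosed_subset (hKc.image continuous_snd)
  · exact hKc.isClosed.preimage (Continuous.prodMk_right t)
  · intro y hy; exact ⟨(t, y), hy, rfl⟩

lemma slice_convex {K : Set (ℝ × ℝ)} (hKconv : Convex ℝ K) (t : ℝ) :
    Convex ℝ {y | (t, y) ∈ K} := by
  intro y1 h1 y2 h2 α β hα hβ hαβ
  have := hKconv h1 h2 hα hβ hαβ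
  rw [combo_pt] at this
  simpa [hαβ, show α * t + β * t = (α + β) * t by ring] using this

lemma slice_eq_Icc {K : Set (ℝ × ℝ)} (hKc : IsCompact K) (hKconv : Convex ℝ K) {t : ℝ}
    (hne : {y | (t, y) ∈ K}.Nonempty) :
    {y | (t, y) ∈ K} = Icc (sInf {y | (t, y) ∈ K}) (sSup {y | (t, y) ∈ K}) := by
  have hc := slice_compact hKc t
  apply Subset.antisymm
  · intro y hy
    exact ⟨csInf_le hc.bddBelow hy, le_csSup hc.bddAbove hy⟩
  · have h1 : sInf {y | (t, y) ∈ K} ∈ {y | (t, y) ∈ K} :=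
      hc.isClosed.csInf_mem hne hc.bddBelow
    have h2 : sSup {y | (t, y) ∈ K} ∈ {y | (t, y) ∈ K} :=
      hc.isClosed.csSup_mem hne hc.bddAbove
    exact ((slice_convex hKconv t).ordConnected).out h1 h2

lemma sliceLen_eq' {K : Set (ℝ × ℝ)} (hKc : IsCompact K) (hKconv : Convex ℝ K) {t : ℝ}
    (hne : {y | (t, y) ∈ K}.Nonempty) :
    sliceLen K t = sSup {y | (t, y) ∈ K} - sInf {y | (t, y) ∈ K} := by
  have hc := slice_compact hKc t
  have hle : sInf {y | (t, y) ∈ K} ≤ sSup {y | (t, y) ∈ K} :=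
    csInf_le_csSup hne hc.bddBelow hc.bddAbove
  rw [sliceLen, slice_eq_Icc hKc hKconv hne, Real.volume_Icc,
    ENNReal.toReal_ofReal (by linarith), csSup_Icc hle, csInf_Icc hle]

lemma mem_of_slice_bounds {K : Set (ℝ × ℝ)} (hKc : IsCompact K) (hKconv : Convex ℝ K) {t y : ℝ}
    (hne : {y | (t, y) ∈ K}.Nonempty)
    (h1 : sInf {y | (t, y) ∈ K} ≤ y) (h2 : y ≤ sSup {y | (t, y) ∈ K}) : (t, y) ∈ K := by
  have := slice_eq_Icc hKc hKconv hne
  have : y ∈ {y | (t, y) ∈ K} := by rw [this]; exact ⟨h1, h2⟩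
  exact this

lemma slice_endpoints_mem {K : Set (ℝ × ℝ)} (hKc : IsCompact K) (hKconv : Convex ℝ K) {t : ℝ}
    (hne : {y | (t, y) ∈ K}.Nonempty) :
    (t, sInf {y | (t, y) ∈ K}) ∈ K ∧ (t, sSup {y | (t, y) ∈ K}) ∈ K := by
  have hc := slice_compact hKc t
  exact ⟨hc.isClosed.csInf_mem hne hc.bddBelow, hc.isClosed.csSup_mem hne hc.bddAbove⟩

/-- Concavity of the slice length function. -/
lemma sliceLen_concave {K : Set (ℝ × ℝ)} (hKc : IsCompact K) (hKconv : Convex ℝ K)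
    {t1 t3 α β : ℝ} (hne1 : {y | (t1, y) ∈ K}.Nonempty) (hne3 : {y | (t3, y) ∈ K}.Nonempty)
    (hα : 0 ≤ α) (hβ : 0 ≤ β) (hαβ : α + β = 1) :
    α * sliceLen K t1 + β * sliceLen K t3 ≤ sliceLen K (α * t1 + β * t3) := by
  set t2 := α * t1 + β * t3 with ht2
  obtain ⟨hg1, hh1⟩ := slice_endpoints_mem hKc hKconv hne1
  obtain ⟨hg3, hh3⟩ := slice_endpoints_mem hKc hKconv hne3
  have hcg : (t2, α * sInf {y | (t1, y) ∈ K} + β * sInf {y | (t3, y) ∈ K}) ∈ K := by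
    have := hKconv hg1 hg3 hα hβ hαβ
    rwa [combo_pt] at this
  have hch : (t2, α * sSup {y | (t1, y) ∈ K} + β * sSup {y | (t3, y) ∈ K}) ∈ K := by
    have := hKconv hh1 hh3 hα hβ hαβ
    rwa [combo_pt] at this
  have hne2 : {y | (t2, y) ∈ K}.Nonempty := ⟨_, hcg⟩
  have hc2 := slice_compact hKc t2
  have hlo : sInf {y | (t2, y) ∈ K} ≤ α * sInf {y | (t1, y) ∈ K} + β * sInf {y | (t3, y) ∈ K} :=
    csInf_le hc2.bddBelow hcg
  have hhi : α * sSup {y | (t1, y) ∈ K} + β * sSup {y | (t3, y) ∈ K} ≤ sSup {y | (t2, y) ∈ K} :=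
    le_csSup hc2.bddAbove hch
  rw [sliceLen_eq' hKc hKconv hne1, sliceLen_eq' hKc hKconv hne3, sliceLen_eq' hKc hKconv hne2]
  nlinarith [hlo, hhi]

lemma slice_ne {K : Set (ℝ × ℝ)} {A B t : ℝ} (hproj : Prod.fst '' K = Icc A B)
    (ht : t ∈ Icc A B) : {y | (t, y) ∈ K}.Nonempty := by
  rw [← hproj] at ht
  obtain ⟨p, hp, hpt⟩ := ht
  exact ⟨p.2, by simpa [← hpt] using hp⟩

lemma mem_proj {K : Set (ℝ × ℝ)} {A B : ℝ} (hproj : Prod.fst '' K = Icc A B)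
    {p : ℝ × ℝ} (hp : p ∈ K) : p.1 ∈ Icc A B := by
  rw [← hproj]; exact ⟨p, hp, rfl⟩

/-- The slice length attains its maximum on the projection. -/
lemma sliceLen_max_attained {K : Set (ℝ × ℝ)} (hKc : IsCompact K) (hKconv : Convex ℝ K)
    {A B : ℝ} (hAB : A ≤ B) (hproj : Prod.fst '' K = Icc A B) :
    ∃ t0 ∈ Icc A B, ∀ u ∈ Icc A B, sliceLen K u ≤ sliceLen K t0 := by
  have hABne : (Icc A B).Nonempty := nonempty_Icc.2 hAB
  set D : Icc A B → Set ℝ := fun u =>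
    Prod.fst '' (K ∩ {p : ℝ × ℝ | (p.1, p.2 + sliceLen K (u : ℝ)) ∈ K}) with hD
  have hDeq : ∀ u : Icc A B, D u = {t ∈ Icc A B | sliceLen K (u : ℝ) ≤ sliceLen K t} := by
    intro u
    ext t
    constructor
    · rintro ⟨p, ⟨hpK, hps⟩, rfl⟩
      have htI : p.1 ∈ Icc A B := mem_proj hproj hpK
      have hne : {y | (p.1, y) ∈ K}.Nonempty := ⟨p.2, by simpa using hpK⟩
      have hc := slice_compact hKc p.1
      have h1 : sInf {y | (p.1, y) ∈ K} ≤ p.2 := csInf_le hc.bddBelow (by simpa using hpK)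
      have h2 : p.2 + sliceLen K (u : ℝ) ≤ sSup {y | (p.1, y) ∈ K} :=
        le_csSup hc.bddAbove hps
      refine ⟨htI, ?_⟩
      rw [sliceLen_eq' hKc hKconv hne]
      linarith
    · rintro ⟨htI, hle⟩
      have hne : {y | (t, y) ∈ K}.Nonempty := slice_ne hproj htI
      obtain ⟨hgm, hhm⟩ := slice_endpoints_mem hKc hKconv hne
      have hflen := sliceLen_eq' hKc hKconv hne
      have hu0 : 0 ≤ sliceLen K (u : ℝ) := ENNReal.toReal_nonneg
      refine ⟨(t, sInf {y | (t, y) ∈ K}), ⟨hgm, ?_⟩, rfl⟩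
      exact mem_of_slice_bounds hKc hKconv hne (by linarith) (by simp only []; linarith)
  have hDcpt : ∀ u : Icc A B, IsCompact (D u) := by
    intro u
    apply IsCompact.image _ continuous_fst
    apply hKc.inter_right
    exact hKc.isClosed.preimage (by fun_prop)
  have hDne : ∀ u : Icc A B, (D u).Nonempty := by
    intro u
    rw [hDeq u]
    exact ⟨(u : ℝ), u.2, le_refl _⟩
  have hDdir : Directed (· ⊇ ·) D := by
    intro u v
    rcases le_total (sliceLen K (u : ℝ)) (sliceLen K (v : ℝ)) with hle | hle
    · exact ⟨v, by rw [hDeq u, hDeq v]; exact fun t ⟨h1, h2⟩ => ⟨h1, le_trans hle h2⟩,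
        subset_refl _⟩
    · exact ⟨u, subset_refl _, by rw [hDeq u, hDeq v]; exact
        fun t ⟨h1, h2⟩ => ⟨h1, le_trans hle h2⟩⟩
  have : (⋂ u, D u).Nonempty := by
    haveI : Nonempty (Icc A B) := hABne.to_subtype
    exact IsCompact.nonempty_iInter_of_directed_nonempty_isCompact_isClosed D hDdir hDne
      hDcpt (fun u => (hDcpt u).isClosed)
  obtain ⟨t0, ht0⟩ := this
  have ht0' := mem_iInter.1 ht0
  have ht0I : t0 ∈ Icc A B := by
    have := ht0' ⟨A, le_refl A, hAB⟩
    rw [hDeq] at this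
    exact this.1
  refine ⟨t0, ht0I, fun u hu => ?_⟩
  have := ht0' ⟨u, hu⟩
  rw [hDeq] at this
  exact this.2
lemma key1 {K : Set (ℝ × ℝ)} (hKc : IsCompact K) (hKconv : Convex ℝ K) {a b : ℝ}
    (ha : 0 < a) (hb : 0 < b) (hproj : Prod.fst '' K = Icc (1 - a) (1 + b))
    (hpl : plvsl K ≤ 1) :
    ∀ t ∈ Icc (1 - a) (1 + b), 1 < t → sliceLen K t ≤ sliceLen K 1 := by
  intro t ht htgt
  by_contra hcon
  push_neg at hcon
  -- every point ≤ 1 has strictly smaller slice than t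
  have hlt : ∀ u ∈ Icc (1 - a) (1 + b), u ≤ 1 → sliceLen K u < sliceLen K t := by
    intro u hu hu1
    by_contra hge
    push_neg at hge
    rcases eq_or_lt_of_le hu1 with rfl | hult
    · exact absurd hge (by linarith)
    · set lam := (t - 1) / (t - u) with hlam
      have htu : 0 < t - u := by linarith
      have hlam0 : 0 < lam := div_pos (by linarith) htu
      have hlam1 : lam < 1 := (div_lt_one htu).2 (by linarith)
      have hcombo : lam * u + (1 - lam) * t = 1 := by
        rw [hlam]
        field_simp
        ring
      have hconc := sliceLen_concave hKc hKconv (slice_ne hproj hu) (slice_ne hproj ht)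
        hlam0.le (by linarith : (0:ℝ) ≤ 1 - lam) (by ring)
      rw [hcombo] at hconc
      nlinarith
  obtain ⟨t0, ht0I, ht0max⟩ := sliceLen_max_attained hKc hKconv (by linarith) hproj
  have ht0t : sliceLen K t ≤ sliceLen K t0 := ht0max t ht
  have ht0gt : 1 < t0 := by
    by_contra hle
    push_neg at hle
    exact absurd ht0t (not_le.2 (hlt t0 ht0I hle))
  have hmsp : maxSlicePos K = {q ∈ Icc (1 - a) (1 + b) |
      ∀ s ∈ Icc (1 - a) (1 + b), sliceLen K s ≤ sliceLen K q} := by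
    unfold maxSlicePos
    rw [hproj]
  have ht0mem : t0 ∈ maxSlicePos K := by rw [hmsp]; exact ⟨ht0I, ht0max⟩
  have hallgt : ∀ q ∈ maxSlicePos K, 1 < q := by
    intro q hq
    rw [hmsp] at hq
    by_contra hle
    push_neg at hle
    have h1 : sliceLen K t ≤ sliceLen K q := hq.2 t ht
    exact absurd h1 (not_le.2 (hlt q hq.1 hle))
  have hsub : maxSlicePos K ⊆ Icc (1 - a) (1 + b) := by
    rw [hmsp]; exact fun q hq => hq.1
  have hbdd : BddAbove (maxSlicePos K) := bddAbove_Icc.mono hsub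
  have h1 : (1 : ℝ) ≤ sInf (maxSlicePos K) :=
    le_csInf ⟨t0, ht0mem⟩ (fun q hq => (hallgt q hq).le)
  have h2 : t0 ≤ sSup (maxSlicePos K) := le_csSup hbdd ht0mem
  have : 1 < plvsl K := by
    unfold plvsl
    linarith
  linarith
/-- Existence of a nonpositive-slope supporting line at `t = 1` for the slice length. -/
lemma key2 {K : Set (ℝ × ℝ)} (hKc : IsCompact K) (hKconv : Convex ℝ K) {a b : ℝ}
    (ha : 0 < a) (hb : 0 < b) (hproj : Prod.fst '' K = Icc (1 - a) (1 + b))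
    (hpl : plvsl K ≤ 1) :
    ∃ s : ℝ, s ≤ 0 ∧
      ∀ t ∈ Icc (1 - a) (1 + b), sliceLen K t ≤ sliceLen K 1 + s * (t - 1) := by
  set c := sliceLen K 1 with hc
  set Sl : Set ℝ := {r | ∃ t : ℝ, (1 < t ∧ t ≤ 1 + b) ∧ r = (sliceLen K t - c) / (t - 1)}
    with hSl
  have hSlne : Sl.Nonempty := ⟨_, 1 + b, ⟨by linarith, le_refl _⟩, rfl⟩
  have hub : ∀ r ∈ Sl, r ≤ 0 := by
    rintro r ⟨t, ⟨ht1, htb⟩, rfl⟩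
    have htI : t ∈ Icc (1 - a) (1 + b) := ⟨by linarith, htb⟩
    have hle := key1 hKc hKconv ha hb hproj hpl t htI ht1
    exact div_nonpos_of_nonpos_of_nonneg (by linarith) (by linarith)
  have hbddA : BddAbove Sl := ⟨0, hub⟩
  set s := sSup Sl with hs
  have hs0 : s ≤ 0 := csSup_le hSlne hub
  refine ⟨s, hs0, fun t ht => ?_⟩
  rcases lt_trichotomy t 1 with hlt1 | rfl | hgt1
  · -- t < 1
    have hstep : ∀ ε : ℝ, 0 < ε → sliceLen K t ≤ c + s * (t - 1) + (1 - t) * ε := by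
      intro ε hε
      obtain ⟨r, hrSl, hrgt⟩ := exists_lt_of_lt_csSup hSlne (show s - ε < s by linarith)
      obtain ⟨t', ⟨ht'1, ht'b⟩, rfl⟩ := hrSl
      set rr := (sliceLen K t' - c) / (t' - 1) with hrr
      have ht'I : t' ∈ Icc (1 - a) (1 + b) := ⟨by linarith, ht'b⟩
      have htu : (0 : ℝ) < t' - t := by linarith
      have hαβ : (t' - 1) / (t' - t) + (1 - t) / (t' - t) = 1 := by
        field_simp
        ring
      have hα : (0:ℝ) ≤ (t' - 1) / (t' - t) :=
        div_nonneg (by linarith) (by linarith)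
      have hβ : (0:ℝ) ≤ (1 - t) / (t' - t) :=
        div_nonneg (by linarith) (by linarith)
      have hconc := sliceLen_concave hKc hKconv (slice_ne hproj ht) (slice_ne hproj ht'I)
        hα hβ hαβ
      have hpt : (t' - 1) / (t' - t) * t + (1 - t) / (t' - t) * t' = 1 := by
        field_simp
        ring
      rw [hpt] at hconc
      have hconc' : ((t' - 1) * sliceLen K t + (1 - t) * sliceLen K t') / (t' - t) ≤ c := by
        rw [add_div]
        convert hconc using 2 <;> ring
      have h5 := (div_le_iff₀ htu).1 hconc'
      have hrval : rr * (t' - 1) = sliceLen K t' - c := by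
        rw [hrr]
        exact div_mul_cancel₀ _ (by linarith : t' - 1 ≠ 0)
      have h7 : (1 - t) * (rr * (t' - 1)) = (1 - t) * (sliceLen K t' - c) := by rw [hrval]
      have h6 : (t' - 1) * sliceLen K t ≤ (t' - 1) * (c + (t - 1) * rr) := by nlinarith
      have h8 : sliceLen K t ≤ c + (t - 1) * rr :=
        le_of_mul_le_mul_left h6 (by linarith)
      have h9 : (t - 1) * rr ≤ (t - 1) * (s - ε) :=
        mul_le_mul_of_nonpos_left hrgt.le (by linarith)
      nlinarith
    by_contra hgt
    push_neg at hgt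
    have h1t : (0:ℝ) < 1 - t := by linarith
    set ε := (sliceLen K t - (c + s * (t - 1))) / (2 * (1 - t)) with hε
    have hεpos : 0 < ε := div_pos (by linarith) (by linarith)
    have hεval : (1 - t) * ε = (sliceLen K t - (c + s * (t - 1))) / 2 := by
      rw [hε]
      field_simp
    have := hstep ε hεpos
    rw [hεval] at this
    linarith
  · simp [hc]
  · set r := (sliceLen K t - c) / (t - 1) with hr
    have hrSl : r ∈ Sl := ⟨t, ⟨hgt1, ht.2⟩, rfl⟩
    have hrs : r ≤ s := le_csSup hbddA hrSl
    have hrval : r * (t - 1) = sliceLen K t - c := by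
      rw [hr]
      exact div_mul_cancel₀ _ (by linarith : t - 1 ≠ 0)
    have := mul_le_mul_of_nonneg_right hrs (by linarith : (0:ℝ) ≤ t - 1)
    linarith
/-- The area is bounded by the integral of the supporting line. -/
lemma area_bound {K : Set (ℝ × ℝ)} (hKc : IsCompact K) (hKconv : Convex ℝ K) {a b : ℝ}
    (ha : 0 < a) (hb : 0 < b) (hproj : Prod.fst '' K = Icc (1 - a) (1 + b))
    {s c : ℝ} (hs0 : s ≤ 0) (hcval : c = sliceLen K 1)
    (hline : ∀ t ∈ Icc (1 - a) (1 + b), sliceLen K t ≤ c + s * (t - 1)) :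
    (volume K).toReal ≤ c * (a + b) + s * (b ^ 2 - a ^ 2) / 2 := by
  have hcsb : 0 ≤ c + s * b := by
    have h1 : (1 + b : ℝ) ∈ Icc (1 - a) (1 + b) := ⟨by linarith, le_refl _⟩
    have := hline _ h1
    have h0 : (0:ℝ) ≤ sliceLen K (1 + b) := ENNReal.toReal_nonneg
    have : s * (1 + b - 1) = s * b := by ring
    linarith [hline _ h1, h0, this.symm ▸ (hline _ h1)]
  have hl0 : ∀ t ∈ Icc (1 - a) (1 + b), 0 ≤ c + s * (t - 1) := by
    intro t ht
    have : s * b ≤ s * (t - 1) := mul_le_mul_of_nonpos_left (by linarith [ht.2]) hs0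
    linarith
  have hKm : MeasurableSet K := hKc.isClosed.measurableSet
  have hvol : volume K = ∫⁻ t, volume {y : ℝ | (t, y) ∈ K} := by
    rw [Measure.volume_eq_prod ℝ ℝ, Measure.prod_apply hKm]
    rfl
  have hpw : ∀ t, volume {y : ℝ | (t, y) ∈ K} ≤
      (Icc (1 - a) (1 + b)).indicator (fun u => ENNReal.ofReal (c + s * (u - 1))) t := by
    intro t
    by_cases htI : t ∈ Icc (1 - a) (1 + b)
    · rw [indicator_of_mem htI]
      have hne : {y | (t, y) ∈ K}.Nonempty := slice_ne hproj htI
      have hc := slice_compact hKc t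
      have hle : sInf {y | (t, y) ∈ K} ≤ sSup {y | (t, y) ∈ K} :=
        csInf_le_csSup hne hc.bddBelow hc.bddAbove
      rw [slice_eq_Icc hKc hKconv hne, Real.volume_Icc]
      apply ENNReal.ofReal_le_ofReal
      have := hline t htI
      rw [sliceLen_eq' hKc hKconv hne] at this
      linarith
    · have hempty : {y : ℝ | (t, y) ∈ K} = ∅ := by
        ext y
        simp only [mem_setOf_eq, mem_empty_iff_false, iff_false]
        intro hy
        exact htI (mem_proj hproj hy)
      simp [hempty]
  have hstep1 : volume K ≤ ∫⁻ t in Icc (1 - a) (1 + b), ENNReal.ofReal (c + s * (t - 1)) := by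
    rw [hvol, ← lintegral_indicator measurableSet_Icc]
    exact lintegral_mono hpw
  have hInt : IntegrableOn (fun t : ℝ => c + s * (t - 1)) (Icc (1 - a) (1 + b)) :=
    (by fun_prop : Continuous fun t : ℝ => c + s * (t - 1)).integrableOn_Icc
  have hstep2 : ∫⁻ t in Icc (1 - a) (1 + b), ENNReal.ofReal (c + s * (t - 1)) =
      ENNReal.ofReal (∫ t in Icc (1 - a) (1 + b), (c + s * (t - 1))) := by
    rw [← MeasureTheory.ofReal_integral_eq_lintegral_ofReal hInt]
    exact (ae_restrict_iff' measurableSet_Icc).2 (Filter.Eventually.of_forall hl0)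
  have hIval : ∫ t in Icc (1 - a) (1 + b), (c + s * (t - 1)) =
      c * (a + b) + s * (b ^ 2 - a ^ 2) / 2 := by
    rw [MeasureTheory.integral_Icc_eq_integral_Ioc,
      ← intervalIntegral.integral_of_le (by linarith : (1 - a : ℝ) ≤ 1 + b)]
    have h1 : IntervalIntegrable (fun _ : ℝ => c) volume (1 - a) (1 + b) :=
      intervalIntegrable_const
    have h2 : IntervalIntegrable (fun t : ℝ => s * (t - 1)) volume (1 - a) (1 + b) :=
      (by fun_prop : Continuous fun t : ℝ => s * (t - 1)).intervalIntegrable _ _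
    rw [intervalIntegral.integral_add h1 h2, intervalIntegral.integral_const,
      intervalIntegral.integral_const_mul,
      intervalIntegral.integral_sub intervalIntegral.intervalIntegrable_id
        intervalIntegrable_const,
      integral_id, intervalIntegral.integral_const]
    simp only [smul_eq_mul]
    ring
  have hI0 : 0 ≤ c * (a + b) + s * (b ^ 2 - a ^ 2) / 2 := by
    rw [← hIval]
    exact setIntegral_nonneg measurableSet_Icc hl0
  calc (volume K).toReal ≤ (ENNReal.ofReal (c * (a + b) + s * (b ^ 2 - a ^ 2) / 2)).toReal := by
        apply ENNReal.toReal_mono ENNReal.ofReal_ne_top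
        rw [← hIval] at *
        exact le_trans hstep1 (le_of_eq (hIval ▸ hstep2))
    _ = c * (a + b) + s * (b ^ 2 - a ^ 2) / 2 := ENNReal.toReal_ofReal hI0
lemma combo_mem {K : Set (ℝ × ℝ)} (hKconv : Convex ℝ K) {p q : ℝ × ℝ}
    (hp : p ∈ K) (hq : q ∈ K) {lam : ℝ} (h0 : 0 ≤ lam) (h1 : lam ≤ 1) :
    (lam * p.1 + (1 - lam) * q.1, lam * p.2 + (1 - lam) * q.2) ∈ K := by
  have := hKconv hp hq h0 (by linarith : (0:ℝ) ≤ 1 - lam) (by ring)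
  rw [show (p : ℝ × ℝ) = (p.1, p.2) from rfl, show (q : ℝ × ℝ) = (q.1, q.2) from rfl,
    combo_pt] at this
  exact this

/-- `sliceLen K 1 ≤ #(interior K ∩ ℤ²) + 1`. -/
lemma count_bound {K : Set (ℝ × ℝ)} (hKc : IsCompact K) (hKconv : Convex ℝ K) {a b : ℝ}
    (ha : 0 < a) (hb : 0 < b) (hproj : Prod.fst '' K = Icc (1 - a) (1 + b)) :
    sliceLen K 1 ≤ ((interior K ∩ latticePts).ncard : ℝ) + 1 := by
  have h1I : (1:ℝ) ∈ Icc (1 - a) (1 + b) := ⟨by linarith, by linarith⟩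
  have hAI : (1 - a : ℝ) ∈ Icc (1 - a) (1 + b) := ⟨le_refl _, by linarith⟩
  have hBI : (1 + b : ℝ) ∈ Icc (1 - a) (1 + b) := ⟨by linarith, le_refl _⟩
  have hne1 := slice_ne hproj h1I
  have hneA := slice_ne hproj hAI
  have hneB := slice_ne hproj hBI
  set g1 := sInf {y | ((1:ℝ), y) ∈ K} with hg1
  set h1 := sSup {y | ((1:ℝ), y) ∈ K} with hh1
  set gA := sInf {y | ((1 - a : ℝ), y) ∈ K} with hgA
  set hA := sSup {y | ((1 - a : ℝ), y) ∈ K} with hhA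
  set gB := sInf {y | ((1 + b : ℝ), y) ∈ K} with hgB
  set hB := sSup {y | ((1 + b : ℝ), y) ∈ K} with hhB
  obtain ⟨hg1m', hh1m'⟩ := slice_endpoints_mem hKc hKconv hne1
  obtain ⟨hgAm', hhAm'⟩ := slice_endpoints_mem hKc hKconv hneA
  obtain ⟨hgBm', hhBm'⟩ := slice_endpoints_mem hKc hKconv hneB
  have hg1m : ((1:ℝ), g1) ∈ K := hg1m'
  have hh1m : ((1:ℝ), h1) ∈ K := hh1m'
  have hgAm : ((1 - a : ℝ), gA) ∈ K := hgAm'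
  have hhAm : ((1 - a : ℝ), hA) ∈ K := hhAm'
  have hgBm : ((1 + b : ℝ), gB) ∈ K := hgBm'
  have hhBm : ((1 + b : ℝ), hB) ∈ K := hhBm'
  have hg1le : sInf {y | ((1:ℝ), y) ∈ K} = g1 := hg1.symm
  have hh1le : sSup {y | ((1:ℝ), y) ∈ K} = h1 := hh1.symm
  have hslen : sliceLen K 1 = h1 - g1 := by
    rw [sliceLen_eq' hKc hKconv hne1, hg1le, hh1le]
  clear_value g1 h1 gA hA gB hB
  clear hg1 hh1 hgA hhA hgB hhB hg1m' hh1m' hgAm' hhAm' hgBm' hhBm'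
  set C := 1 + |gA - g1| / a + |gB - g1| / b + |hA - h1| / a + |hB - h1| / b with hC
  have hCnn : ∀ u : ℝ, 0 ≤ |u| / a ∧ 0 ≤ |u| / b := fun u =>
    ⟨div_nonneg (abs_nonneg u) ha.le, div_nonneg (abs_nonneg u) hb.le⟩
  clear_value C
  have hC0 : 0 < C := by
    have := hCnn (gA - g1); have := hCnn (gB - g1); have := hCnn (hA - h1)
    have := hCnn (hB - h1)
    rw [hC]; linarith [(hCnn (gA - g1)).1, (hCnn (gB - g1)).2, (hCnn (hA - h1)).1,
      (hCnn (hB - h1)).2]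
  -- chord bounds
  have hchordg : ∀ x ∈ Icc (1 - a) (1 + b), sInf {y | (x, y) ∈ K} ≤ g1 + C * |x - 1| := by
    intro x hx
    rcases le_total x 1 with hx1 | hx1
    · set lam := (1 - x) / a with hlam
      have hlam0 : 0 ≤ lam := div_nonneg (by linarith) ha.le
      have hlam1 : lam ≤ 1 := by
        rw [hlam, div_le_one ha]; linarith [hx.1]
      have hmemc := combo_mem hKconv hgAm hg1m hlam0 hlam1
      have hxe : lam * (1 - a) + (1 - lam) * 1 = x := by
        have : lam * a = 1 - x := by rw [hlam]; exact div_mul_cancel₀ _ (ne_of_gt ha)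
        linarith [this]
      rw [hxe] at hmemc
      have hle : sInf {y | (x, y) ∈ K} ≤ lam * gA + (1 - lam) * g1 :=
        csInf_le (slice_compact hKc x).bddBelow hmemc
      have habs : |x - 1| = 1 - x := by rw [abs_of_nonpos (by linarith)]; ring
      have h2 : lam * (gA - g1) ≤ lam * |gA - g1| :=
        mul_le_mul_of_nonneg_left (le_abs_self _) hlam0
      have h3 : lam * |gA - g1| = (1 - x) * (|gA - g1| / a) := by rw [hlam]; ring
      have h4 : (1 - x) * (|gA - g1| / a) ≤ (1 - x) * C := by
        apply mul_le_mul_of_nonneg_left _ (by linarith)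
        rw [hC]
        linarith [(hCnn (gB - g1)).2, (hCnn (hA - h1)).1, (hCnn (hB - h1)).2]
      rw [habs]
      linarith [hle, h2, h3, h4]
    · set lam := (x - 1) / b with hlam
      have hlam0 : 0 ≤ lam := div_nonneg (by linarith) hb.le
      have hlam1 : lam ≤ 1 := by
        rw [hlam, div_le_one hb]; linarith [hx.2]
      have hmemc := combo_mem hKconv hgBm hg1m hlam0 hlam1
      have hxe : lam * (1 + b) + (1 - lam) * 1 = x := by
        have : lam * b = x - 1 := by rw [hlam]; exact div_mul_cancel₀ _ (ne_of_gt hb)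
        linarith [this]
      rw [hxe] at hmemc
      have hle : sInf {y | (x, y) ∈ K} ≤ lam * gB + (1 - lam) * g1 :=
        csInf_le (slice_compact hKc x).bddBelow hmemc
      have habs : |x - 1| = x - 1 := abs_of_nonneg (by linarith)
      have h2 : lam * (gB - g1) ≤ lam * |gB - g1| :=
        mul_le_mul_of_nonneg_left (le_abs_self _) hlam0
      have h3 : lam * |gB - g1| = (x - 1) * (|gB - g1| / b) := by rw [hlam]; ring
      have h4 : (x - 1) * (|gB - g1| / b) ≤ (x - 1) * C := by
        apply mul_le_mul_of_nonneg_left _ (by linarith)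
        rw [hC]
        linarith [(hCnn (gA - g1)).1, (hCnn (hA - h1)).1, (hCnn (hB - h1)).2]
      rw [habs]
      linarith [hle, h2, h3, h4]
  have hchordh : ∀ x ∈ Icc (1 - a) (1 + b), h1 - C * |x - 1| ≤ sSup {y | (x, y) ∈ K} := by
    intro x hx
    rcases le_total x 1 with hx1 | hx1
    · set lam := (1 - x) / a with hlam
      have hlam0 : 0 ≤ lam := div_nonneg (by linarith) ha.le
      have hlam1 : lam ≤ 1 := by
        rw [hlam, div_le_one ha]; linarith [hx.1]
      have hmemc := combo_mem hKconv hhAm hh1m hlam0 hlam1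
      have hxe : lam * (1 - a) + (1 - lam) * 1 = x := by
        have : lam * a = 1 - x := by rw [hlam]; exact div_mul_cancel₀ _ (ne_of_gt ha)
        linarith [this]
      rw [hxe] at hmemc
      have hle : lam * hA + (1 - lam) * h1 ≤ sSup {y | (x, y) ∈ K} :=
        le_csSup (slice_compact hKc x).bddAbove hmemc
      have habs : |x - 1| = 1 - x := by rw [abs_of_nonpos (by linarith)]; ring
      have h2 : lam * (h1 - hA) ≤ lam * |hA - h1| := by
        rw [abs_sub_comm]
        exact mul_le_mul_of_nonneg_left (le_abs_self _) hlam0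
      have h3 : lam * |hA - h1| = (1 - x) * (|hA - h1| / a) := by rw [hlam]; ring
      have h4 : (1 - x) * (|hA - h1| / a) ≤ (1 - x) * C := by
        apply mul_le_mul_of_nonneg_left _ (by linarith)
        rw [hC]
        linarith [(hCnn (gA - g1)).1, (hCnn (gB - g1)).2, (hCnn (hB - h1)).2]
      rw [habs]
      linarith [hle, h2, h3, h4]
    · set lam := (x - 1) / b with hlam
      have hlam0 : 0 ≤ lam := div_nonneg (by linarith) hb.le
      have hlam1 : lam ≤ 1 := by
        rw [hlam, div_le_one hb]; linarith [hx.2]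
      have hmemc := combo_mem hKconv hhBm hh1m hlam0 hlam1
      have hxe : lam * (1 + b) + (1 - lam) * 1 = x := by
        have : lam * b = x - 1 := by rw [hlam]; exact div_mul_cancel₀ _ (ne_of_gt hb)
        linarith [this]
      rw [hxe] at hmemc
      have hle : lam * hB + (1 - lam) * h1 ≤ sSup {y | (x, y) ∈ K} :=
        le_csSup (slice_compact hKc x).bddAbove hmemc
      have habs : |x - 1| = x - 1 := abs_of_nonneg (by linarith)
      have h2 : lam * (h1 - hB) ≤ lam * |hB - h1| := by
        rw [abs_sub_comm]
        exact mul_le_mul_of_nonneg_left (le_abs_self _) hlam0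
      have h3 : lam * |hB - h1| = (x - 1) * (|hB - h1| / b) := by rw [hlam]; ring
      have h4 : (x - 1) * (|hB - h1| / b) ≤ (x - 1) * C := by
        apply mul_le_mul_of_nonneg_left _ (by linarith)
        rw [hC]
        linarith [(hCnn (gA - g1)).1, (hCnn (gB - g1)).2, (hCnn (hA - h1)).1]
      rw [habs]
      linarith [hle, h2, h3, h4]
  -- interior membership of lattice points on the slice at 1
  have hint : ∀ n : ℤ, g1 < (n : ℝ) → (n : ℝ) < h1 → ((1 : ℝ), (n : ℝ)) ∈ interior K := by
    intro n hn1 hn2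
    set U : Set (ℝ × ℝ) := {p | |p.1 - 1| < min a b} ∩
      ({p | g1 + C * |p.1 - 1| < p.2} ∩ {p | p.2 < h1 - C * |p.1 - 1|}) with hU
    have hcontabs : Continuous fun p : ℝ × ℝ => |p.1 - 1| :=
      (continuous_fst.sub continuous_const).abs
    have hUopen : IsOpen U := by
      apply IsOpen.inter (isOpen_lt hcontabs continuous_const)
      exact IsOpen.inter
        (isOpen_lt (continuous_const.add (continuous_const.mul hcontabs)) continuous_snd)
        (isOpen_lt continuous_snd (continuous_const.sub (continuous_const.mul hcontabs)))
    have hUK : U ⊆ K := by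
      rintro p ⟨hp1, hp2, hp3⟩
      simp only [mem_setOf_eq] at hp1 hp2 hp3
      have habs := abs_lt.1 (lt_of_lt_of_le hp1 (min_le_left a b))
      have habs' := abs_lt.1 (lt_of_lt_of_le hp1 (min_le_right a b))
      have hxI : p.1 ∈ Icc (1 - a) (1 + b) := ⟨by linarith [habs.1], by linarith [habs'.2]⟩
      have hmem := mem_of_slice_bounds hKc hKconv (slice_ne hproj hxI)
        (le_of_lt (lt_of_le_of_lt (hchordg p.1 hxI) hp2))
        (le_of_lt (lt_of_lt_of_le hp3 (hchordh p.1 hxI)))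
      rwa [Prod.mk.eta] at hmem
    have e0 : |((1:ℝ), (n:ℝ)).1 - 1| = 0 := by norm_num
    have hmemU : ((1 : ℝ), (n : ℝ)) ∈ U := by
      refine ⟨?_, ?_, ?_⟩ <;> simp only [mem_setOf_eq, e0, mul_zero, add_zero, sub_zero]
      · exact lt_min ha hb
      · exact hn1
      · exact hn2
    exact interior_maximal hUK hUopen hmemU
  -- finiteness of interior lattice points
  have hfin : (interior K ∩ latticePts).Finite := by
    obtain ⟨R, hR⟩ := hKc.isBounded.subset_closedBall (0 : ℝ × ℝ)
    set M := ⌈R⌉ with hM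
    apply Set.Finite.subset (Set.Finite.image (fun q : ℤ × ℤ => ((q.1 : ℝ), (q.2 : ℝ)))
      ((Set.finite_Icc (-M) M).prod (Set.finite_Icc (-M) M)))
    rintro p ⟨hpK, m, n, rfl⟩
    have hpK' : ((m : ℝ), (n : ℝ)) ∈ K := interior_subset hpK
    have hball := hR hpK'
    rw [Metric.mem_closedBall, dist_zero_right] at hball
    have hm : |(m : ℝ)| ≤ R := le_trans (norm_fst_le ((m : ℝ), (n : ℝ))) hball
    have hn : |(n : ℝ)| ≤ R := le_trans (norm_snd_le ((m : ℝ), (n : ℝ))) hball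
    have hRM : R ≤ (M : ℝ) := Int.le_ceil R
    have h1 : -M ≤ m ∧ m ≤ M := by
      constructor
      · have : (-M : ℝ) ≤ (m : ℝ) := by push_cast; linarith [abs_le.1 hm, hRM]
        exact_mod_cast this
      · have : (m : ℝ) ≤ (M : ℝ) := le_trans (abs_le.1 hm).2 hRM
        exact_mod_cast this
    have h2 : -M ≤ n ∧ n ≤ M := by
      constructor
      · have : (-M : ℝ) ≤ (n : ℝ) := by push_cast; linarith [abs_le.1 hn, hRM]
        exact_mod_cast this
      · have : (n : ℝ) ≤ (M : ℝ) := le_trans (abs_le.1 hn).2 hRM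
        exact_mod_cast this
    exact ⟨(m, n), ⟨⟨h1.1, h1.2⟩, ⟨h2.1, h2.2⟩⟩, rfl⟩
  -- counting
  set F := Finset.Ioo ⌊g1⌋ ⌈h1⌉ with hF
  have hinj : Function.Injective (fun n : ℤ => ((1 : ℝ), (n : ℝ))) := by
    intro m n hmn
    simpa [Prod.ext_iff] using hmn
  have himg : ((fun n : ℤ => ((1 : ℝ), (n : ℝ))) '' ↑F) ⊆ interior K ∩ latticePts := by
    rintro p ⟨n, hnF, rfl⟩
    rw [Finset.coe_Ioo, mem_Ioo] at hnF
    refine ⟨hint n (Int.floor_lt.1 hnF.1) (Int.lt_ceil.1 hnF.2), 1, n, by norm_num⟩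
  have hcard1 : F.card ≤ (interior K ∩ latticePts).ncard := by
    calc F.card = ((fun n : ℤ => ((1 : ℝ), (n : ℝ))) '' ↑F).ncard := by
          rw [Set.ncard_image_of_injective _ hinj, Set.ncard_coe_finset]
      _ ≤ _ := Set.ncard_le_ncard himg hfin
  have hcard2 : (h1 - g1) - 1 ≤ (F.card : ℝ) := by
    have hcc : F.card = (⌈h1⌉ - ⌊g1⌋ - 1).toNat := by rw [hF, Int.card_Ioo]
    have h3 : (⌈h1⌉ - ⌊g1⌋ - 1 : ℤ) ≤ ((⌈h1⌉ - ⌊g1⌋ - 1).toNat : ℤ) := Int.self_le_toNat _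
    have h4 : ((⌈h1⌉ - ⌊g1⌋ - 1 : ℤ) : ℝ) ≤ (F.card : ℝ) := by
      rw [hcc]; exact_mod_cast h3
    have h5 : h1 ≤ (⌈h1⌉ : ℝ) := Int.le_ceil h1
    have h6 : ((⌊g1⌋ : ℤ) : ℝ) ≤ g1 := Int.floor_le g1
    push_cast at h4
    linarith
  have : (F.card : ℝ) ≤ ((interior K ∩ latticePts).ncard : ℝ) := by exact_mod_cast hcard1
  linarith

theorem stmt6 (K : Set (ℝ × ℝ)) (hK : IsConvexBody K) (a b : ℝ)
    (ha : 0 < a) (ha1 : a ≤ 1) (hb : 0 < b) (hb1 : b ≤ 1)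
    (hproj : Prod.fst '' K = Set.Icc (1 - a) (1 + b))
    (hdir : width K (1, 0) = latticeWidth K)
    (hpl : plvsl K ≤ 1) :
    (a > b → area K ≤ (a + b) ^ 2 * ((intPts K : ℝ) + 1) / (2 * b)) ∧
      (a ≤ b → area K ≤ (a + b) * ((intPts K : ℝ) + 1) ∧
        (a + b) * ((intPts K : ℝ) + 1) ≤ 2 * ((intPts K : ℝ) + 1)) := by
  obtain ⟨hKc, hKconv, hKint⟩ := hK
  obtain ⟨s, hs0, hline⟩ := key2 hKc hKconv ha hb hproj hpl
  have harea : area K ≤ sliceLen K 1 * (a + b) + s * (b ^ 2 - a ^ 2) / 2 :=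
    area_bound hKc hKconv ha hb hproj hs0 rfl hline
  have hcount : sliceLen K 1 ≤ ((intPts K : ℕ) : ℝ) + 1 := count_bound hKc hKconv ha hb hproj
  have hc0 : (0:ℝ) ≤ sliceLen K 1 := ENNReal.toReal_nonneg
  have hcsb : 0 ≤ sliceLen K 1 + s * b := by
    have hBle := hline (1 + b) ⟨by linarith, le_refl _⟩
    have h0 : (0:ℝ) ≤ sliceLen K (1 + b) := ENNReal.toReal_nonneg
    have he : s * (1 + b - 1) = s * b := by ring
    linarith [he ▸ hBle]
  have hk0 : (0:ℝ) ≤ ((intPts K : ℕ) : ℝ) := Nat.cast_nonneg _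
  constructor
  · intro hab
    have h2b : (0:ℝ) < 2 * b := by linarith
    rw [le_div_iff₀ h2b]
    have h1 := mul_le_mul_of_nonneg_right harea (le_of_lt h2b)
    have h2 : 0 ≤ (sliceLen K 1 + s * b) * (a ^ 2 - b ^ 2) :=
      mul_nonneg hcsb (by nlinarith)
    have h3 := mul_le_mul_of_nonneg_right hcount (show (0:ℝ) ≤ (a + b) ^ 2 by positivity)
    nlinarith [h1, h2, h3]
  · intro hab
    have hba : 0 ≤ b ^ 2 - a ^ 2 := by nlinarith
    have h4 : s * (b ^ 2 - a ^ 2) ≤ 0 := mul_nonpos_of_nonpos_of_nonneg hs0 hba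
    have h5 := mul_le_mul_of_nonneg_right hcount (show (0:ℝ) ≤ a + b by linarith)
    constructor
    · nlinarith [harea, h4, h5]
    · nlinarith [hk0]
end
end
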